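/- arXiv:2112.06210 — 6 statements merged into one kernel-verified Lean document; each statement's English description precedes it below -/
import Mathlib

section
/- For a positive integer M, lattice L = √M·ℤ with dual L' = (1/√M)·ℤ, and for k = 0 or 1, the theta function θ_{k,μ}(τ) = Σ_{n ∈ L+μ} n^k q^{n²/2} (where q = e^{2πiτ}, μ ∈ L'/L) satisfies the S-transformation θ_{k,μ}(-1/τ) = ((-1)^k (-i)^{1/2} / √M) · τ^{k+1/2} · Σ_{ν ∈ L'/L} e^{2πi μν} θ_{k,ν}(τ). -/
open Complex Real

section helpers

private lemma sqhalf (x : ℂ) : (x ^ ((1:ℂ)/2)) ^ 2 = x := by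
  rw [← cpow_mul_nat]; norm_num

private lemma auxXY {τ : ℂ} (hτ : 0 < τ.im) {M : ℕ} (hM : 0 < M) :
    (-I * (τ / M)) ^ ((1:ℂ)/2) * (Real.sqrt M : ℂ) = (-I) ^ ((1:ℂ)/2) * τ ^ ((1:ℂ)/2) := by
  have hM0 : (M : ℂ) ≠ 0 := Nat.cast_ne_zero.mpr hM.ne'
  have hsM : (0:ℝ) < Real.sqrt M := Real.sqrt_pos.mpr (by exact_mod_cast hM)
  have hsM2 : ((Real.sqrt M : ℂ)) ^ 2 = (M : ℂ) := by
    rw [← ofReal_pow, Real.sq_sqrt (by positivity : (0:ℝ) ≤ (M:ℝ))]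
    simp only [ofReal_natCast]
  set X := (-I * (τ / M)) ^ ((1:ℂ)/2) * (Real.sqrt M : ℂ) with hX
  set Y := (-I) ^ ((1:ℂ)/2) * τ ^ ((1:ℂ)/2) with hY
  have hsq : X ^ 2 = Y ^ 2 := by
    rw [hX, hY, mul_pow, mul_pow, sqhalf, sqhalf, sqhalf, hsM2]
    field_simp
  have h2inv : ((1:ℂ)/2) = (2⁻¹ : ℂ) := by norm_num
  have hXre : 0 < X.re := by
    have h1 : (-I * (τ / M)).re = (τ/M).im := by simp
    have h2 : 0 < (τ/M).im := by
      rw [div_natCast_im]; positivity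
    have h3 : 0 < ((-I * (τ / M)) ^ ((1:ℂ)/2)).re := by
      rw [h2inv, cpow_inv_two_re]
      apply Real.sqrt_pos.mpr
      have := norm_nonneg (-I * (τ / M))
      rw [h1]
      linarith
    rw [hX]
    simp only [mul_re, ofReal_re, ofReal_im, mul_zero, sub_zero]
    positivity
  have hYre : 0 < Y.re := by
    have hA : ((-I : ℂ) ^ ((1:ℂ)/2)).re = Real.sqrt (1/2) := by
      rw [h2inv, cpow_inv_two_re]; norm_num
    have hA' : ((-I : ℂ) ^ ((1:ℂ)/2)).im = -Real.sqrt (1/2) := by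
      rw [h2inv, cpow_inv_two_im_eq_neg_sqrt (by simp : (-I : ℂ).im < 0)]; norm_num
    have hB : (τ ^ ((1:ℂ)/2)).re = Real.sqrt ((‖τ‖ + τ.re)/2) := by
      rw [h2inv, cpow_inv_two_re]
    have hB' : (τ ^ ((1:ℂ)/2)).im = Real.sqrt ((‖τ‖ - τ.re)/2) := by
      rw [h2inv, cpow_inv_two_im_eq_sqrt hτ.le]
    have habs : |τ.re| < ‖τ‖ := Complex.abs_re_lt_norm.mpr hτ.ne'
    have h1 : 0 ≤ (τ ^ ((1:ℂ)/2)).re := by rw [hB]; positivity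
    have h2 : 0 < (τ ^ ((1:ℂ)/2)).im := by
      rw [hB']; apply Real.sqrt_pos.mpr; cases abs_lt.mp habs; linarith
    rw [hY, mul_re, hA, hA']
    have hs2 : 0 < Real.sqrt (1/2) := by positivity
    nlinarith
  have h0 : (X - Y) * (X + Y) = 0 := by linear_combination hsq
  rcases mul_eq_zero.mp h0 with h | h
  · exact sub_eq_zero.mp h
  · exfalso
    have h2 : (X + Y).re = 0 := by rw [h]; simp
    rw [add_re] at h2; linarith

private lemma aux0 (a : ℝ) {σ : ℂ} (hσ : 0 < σ.im) :
    ∑' n : ℤ, cexp (π * I * ((n:ℂ)+a)^2 * (-1/σ))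
      = (-I*σ) ^ ((1:ℂ)/2) * ∑' m : ℤ, cexp (2*π*I*m*a + π*I*(m:ℂ)^2*σ) := by
  have hσ0 : σ ≠ 0 := fun h => by simp [h] at hσ
  have hP : (-I*σ) ^ ((1:ℂ)/2) ≠ 0 := by
    rw [Ne, cpow_eq_zero_iff]
    simp [hσ0, I_ne_zero]
  have h1 : ∑' n : ℤ, cexp (π * I * ((n:ℂ)+a)^2 * (-1/σ))
      = cexp (-(π * I * (a:ℂ)^2) / σ) * jacobiTheta₂ (-(a:ℂ)/σ) (-1/σ) := by
    rw [jacobiTheta₂, ← tsum_mul_left]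
    refine tsum_congr fun n => ?_
    rw [jacobiTheta₂_term, ← Complex.exp_add]
    congr 1
    field_simp
    ring
  have h2 := jacobiTheta₂_functional_equation (-(a:ℂ)) σ
  rw [jacobiTheta₂_neg_left] at h2
  have h3 : jacobiTheta₂ (a:ℂ) σ = ∑' m : ℤ, cexp (2*π*I*m*a + π*I*(m:ℂ)^2*σ) := by
    rw [jacobiTheta₂]
    exact tsum_congr fun n => by rw [jacobiTheta₂_term]
  rw [h1, ← h3]
  field_simp at h2
  rw [show (-(I*σ)) = (-I*σ) by ring] at h2
  rw [show -(I*(π:ℂ)*(a:ℂ)^2/σ) = -((π:ℂ)*I*(a:ℂ)^2)/σ by ring,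
    show -((a:ℂ)/σ) = -(a:ℂ)/σ by ring, show -(1/σ) = -1/σ by ring] at h2
  linear_combination -h2

private lemma aux1 (a : ℝ) {σ : ℂ} (hσ : 0 < σ.im) :
    ∑' n : ℤ, ((n:ℂ)+a) * cexp (π * I * ((n:ℂ)+a)^2 * (-1/σ))
      = -((-I*σ) ^ ((1:ℂ)/2) * σ) * ∑' m : ℤ, (m:ℂ) * cexp (2*π*I*m*a + π*I*(m:ℂ)^2*σ) := by
  have hσ0 : σ ≠ 0 := fun h => by simp [h] at hσ
  have hτ' : 0 < (-1/σ).im := by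
    rw [div_eq_mul_inv, neg_one_mul, neg_im, inv_im, neg_div, neg_neg]
    exact div_pos hσ (normSq_pos.mpr hσ0)
  have hP : (-I*σ) ^ ((1:ℂ)/2) ≠ 0 := by
    rw [Ne, cpow_eq_zero_iff]
    simp [hσ0, I_ne_zero]
  have h2πI : (2*(π:ℂ)*I) ≠ 0 := by
    simp [Real.pi_ne_zero, I_ne_zero]
  have hs1 := (hasSum_jacobiTheta₂'_term (-(a:ℂ)/σ) hτ').summable
  have hs2 := (hasSum_jacobiTheta₂_term (-(a:ℂ)/σ) hτ').summable
  have h1 : ∑' n : ℤ, ((n:ℂ)+a) * cexp (π * I * ((n:ℂ)+a)^2 * (-1/σ))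
      = cexp (-(π*I*(a:ℂ)^2)/σ) * ((2*(π:ℂ)*I)⁻¹ * jacobiTheta₂' (-(a:ℂ)/σ) (-1/σ)
          + a * jacobiTheta₂ (-(a:ℂ)/σ) (-1/σ)) := by
    rw [jacobiTheta₂', jacobiTheta₂, ← tsum_mul_left, ← tsum_mul_left,
      ← Summable.tsum_add (hs1.mul_left _) (hs2.mul_left _), ← tsum_mul_left]
    refine tsum_congr fun n => ?_
    rw [jacobiTheta₂'_term, jacobiTheta₂_term]
    have he : cexp (π * I * ((n:ℂ)+a)^2 * (-1/σ))
        = cexp (-(π*I*(a:ℂ)^2)/σ) * cexp (2*π*I*n*(-(a:ℂ)/σ) + π*I*(n:ℂ)^2*(-1/σ)) := by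
      rw [← Complex.exp_add]; congr 1; field_simp; ring
    rw [he]
    field_simp
  have h2 := jacobiTheta₂'_functional_equation (-(a:ℂ)) σ
  rw [jacobiTheta₂'_neg_left] at h2
  have h3 : ∑' m : ℤ, (m:ℂ) * cexp (2*π*I*m*a + π*I*(m:ℂ)^2*σ)
      = (2*(π:ℂ)*I)⁻¹ * jacobiTheta₂' (a:ℂ) σ := by
    rw [jacobiTheta₂', ← tsum_mul_left]
    refine tsum_congr fun n => ?_
    rw [jacobiTheta₂'_term, jacobiTheta₂_term]
    field_simp
  rw [h1, h3]
  field_simp at h2 ⊢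
  rw [show (-(I*σ)) = (-I*σ) by ring] at h2 ⊢
  linear_combination -h2

private lemma aux3 {M : ℕ} (hM : 0 < M) (g : ℤ → ℂ) (hg : Summable g) :
    ∑ ν ∈ Finset.range M, ∑' n : ℤ, g (n * M + ν) = ∑' m : ℤ, g m := by
  haveI : NeZero M := ⟨hM.ne'⟩
  let e : Fin M × ℤ ≃ ℤ := (Equiv.prodComm (Fin M) ℤ).trans (Int.divModEquiv M).symm
  have hge : Summable (g ∘ e) := e.summable_iff.mpr hg
  rw [← e.tsum_eq g]
  rw [show (fun c : Fin M × ℤ => g (e c)) = g ∘ e from rfl, Summable.tsum_prod hge]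
  rw [tsum_fintype]
  rw [← Fin.sum_univ_eq_sum_range (fun ν : ℕ => ∑' n : ℤ, g (n * M + ν))]
  rfl

end helpers


open Complex

/-- The theta function `θ_{k,μ}(τ) = ∑_{n ∈ √M ℤ + μ} n^k e^{π i n² τ}`. -/
noncomputable def theta (M : ℕ) (k : ℕ) (μ : ℝ) (τ : ℂ) : ℂ :=
  ∑' n : ℤ, ((Real.sqrt M * n + μ : ℝ) : ℂ) ^ k *
    Complex.exp (Real.pi * Complex.I * ((Real.sqrt M * n + μ : ℝ) : ℂ) ^ 2 * τ)

theorem theta_S_transform_k01 (M : ℕ) (hM : 0 < M) (μ : ℝ)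
    (hμ : ∃ ℓ : ℤ, μ = ℓ / Real.sqrt M) (k : ℕ) (hk : k = 0 ∨ k = 1)
    (τ : ℂ) (hτ : 0 < τ.im) :
    theta M k μ (-1 / τ) =
      ((-1 : ℂ) ^ k * (-Complex.I) ^ ((1 : ℂ) / 2) / (Real.sqrt M : ℂ)) *
        τ ^ ((k : ℂ) + 1 / 2) *
        ∑ ν ∈ Finset.range M,
          Complex.exp (2 * Real.pi * Complex.I * μ * (ν / Real.sqrt M : ℝ)) *
            theta M k (ν / Real.sqrt M) τ := by
  obtain ⟨ℓ, hℓ⟩ := hμ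
  have hMR : (0:ℝ) < M := by exact_mod_cast hM
  have hsMR : (0:ℝ) < Real.sqrt M := Real.sqrt_pos.mpr hMR
  have hsM0R : Real.sqrt M ≠ 0 := hsMR.ne'
  have hsMC : (Real.sqrt M : ℂ) ≠ 0 := ofReal_ne_zero.mpr hsM0R
  have hsM2R : Real.sqrt M ^ 2 = (M:ℝ) := Real.sq_sqrt hMR.le
  have hsM2 : ((Real.sqrt M : ℂ)) ^ 2 = (M:ℂ) := by
    rw [← ofReal_pow, hsM2R]
    simp only [ofReal_natCast]
  have hM0 : (M:ℂ) ≠ 0 := Nat.cast_ne_zero.mpr hM.ne'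
  have hτ0 : τ ≠ 0 := fun h => by simp [h] at hτ
  set a : ℝ := ℓ / M with ha
  set σ : ℂ := τ / M with hσdef
  have hσ : 0 < σ.im := by
    rw [hσdef, div_natCast_im]; positivity
  -- E1 : reduction of the LHS
  have E1 : theta M k μ (-1/τ) = (Real.sqrt M : ℂ)^k *
      ∑' n : ℤ, ((n:ℂ)+a)^k * cexp (π * I * ((n:ℂ)+a)^2 * (-1/σ)) := by
    rw [theta, ← tsum_mul_left]
    refine tsum_congr fun n => ?_
    have hcast : ((Real.sqrt M * n + μ : ℝ):ℂ) = (Real.sqrt M:ℂ) * ((n:ℂ) + a) := by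
      rw [hℓ, ha]
      push_cast
      field_simp
      linear_combination -(ℓ:ℂ) * hsM2
    have harg : π * I * ((Real.sqrt M:ℂ) * ((n:ℂ)+a))^2 * (-1/τ)
        = π * I * ((n:ℂ)+a)^2 * (-1/σ) := by
      have hd : (-1 : ℂ)/(τ/(M:ℂ)) = -(M:ℂ)/τ := by field_simp
      rw [hσdef, hd, mul_pow, hsM2]
      ring
    rw [hcast, harg, mul_pow]
    ring
  -- summability of the regrouped series
  have hg : Summable (fun m : ℤ => (m:ℂ)^k * cexp (2*π*I*m*a + π*I*(m:ℂ)^2*σ)) := by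
    rcases hk with rfl | rfl
    · simp only [pow_zero, one_mul]
      exact (hasSum_jacobiTheta₂_term (a:ℂ) hσ).summable
    · simp only [pow_one]
      refine ((hasSum_jacobiTheta₂'_term (a:ℂ) hσ).summable.mul_left
        ((2*(π:ℂ)*I)⁻¹)).congr fun n => ?_
      rw [jacobiTheta₂'_term, jacobiTheta₂_term]
      have h2πI : (2*(π:ℂ)*I) ≠ 0 := by simp [Real.pi_ne_zero, I_ne_zero]
      field_simp
  -- E2 : reduction of the RHS sum
  have hνeq : ∀ ν : ℕ, (Real.sqrt M:ℂ)^k *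
      (cexp (2 * π * I * μ * ((ν / Real.sqrt M : ℝ):ℂ)) * theta M k (ν/Real.sqrt M) τ)
      = ∑' n : ℤ, ((n * M + ν : ℤ):ℂ)^k *
          cexp (2*π*I*((n * M + ν : ℤ):ℂ)*a + π*I*((n * M + ν : ℤ):ℂ)^2*σ) := by
    intro ν
    rw [theta, ← tsum_mul_left, ← tsum_mul_left]
    refine tsum_congr fun n => ?_
    have hX : ((Real.sqrt M * n + ν/Real.sqrt M : ℝ):ℂ)
        = ((n * M + ν : ℤ):ℂ) / (Real.sqrt M:ℂ) := by
      push_cast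
      field_simp
      linear_combination (n:ℂ) * hsM2
    have hone : cexp (((ℓ * n : ℤ):ℂ) * (2*π*I)) = 1 := by
      exact_mod_cast Complex.exp_int_mul_two_pi_mul_I (ℓ * n)
    have key : cexp (2*π*I*((n * M + ν : ℤ):ℂ)*a + π*I*((n * M + ν : ℤ):ℂ)^2*σ)
        = cexp (2 * π * I * μ * ((ν / Real.sqrt M : ℝ):ℂ))
          * cexp (π * I * (((n * M + ν : ℤ):ℂ) / (Real.sqrt M:ℂ))^2 * τ)
          * cexp (((ℓ * n : ℤ):ℂ) * (2*π*I)) := by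
      rw [← Complex.exp_add, ← Complex.exp_add]
      congr 1
      rw [hℓ, ha, hσdef]
      push_cast
      field_simp
      ring_nf
      linear_combination ((2*(n:ℂ)*(M:ℂ)*(ν:ℂ)*τ + (n:ℂ)^2*(M:ℂ)^2*τ + 2*(ν:ℂ)*(ℓ:ℂ) + (ν:ℂ)^2*τ)) * hsM2
    rw [hX, key, hone, mul_one, div_pow]
    field_simp
  have E2 : (Real.sqrt M:ℂ)^k * (∑ ν ∈ Finset.range M,
        cexp (2 * π * I * μ * ((ν / Real.sqrt M : ℝ):ℂ)) * theta M k (ν/Real.sqrt M) τ)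
      = ∑' m : ℤ, (m:ℂ)^k * cexp (2*π*I*m*a + π*I*(m:ℂ)^2*σ) := by
    rw [Finset.mul_sum]
    rw [Finset.sum_congr rfl (fun ν _ => hνeq ν)]
    exact aux3 hM _ hg
  have hXY := auxXY hτ hM
  rw [← hσdef] at hXY
  have hinv : (Real.sqrt M:ℂ) * (Real.sqrt M:ℂ)⁻¹ = 1 := mul_inv_cancel₀ hsMC
  have hσM : σ * M = τ := by rw [hσdef]; field_simp
  rcases hk with rfl | rfl
  · simp only [pow_zero, one_mul] at E1 E2 ⊢
    rw [E1, aux0 a hσ, E2]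
    simp only [Nat.cast_zero, zero_add]
    linear_combination
      ((∑' m : ℤ, cexp (2*π*I*m*a + π*I*(m:ℂ)^2*σ)) * ((Real.sqrt M:ℂ))⁻¹) * hXY
      - ((∑' m : ℤ, cexp (2*π*I*m*a + π*I*(m:ℂ)^2*σ)) * ((-I*σ) ^ ((1:ℂ)/2))) * hinv
  · simp only [pow_one] at E1 E2 ⊢
    rw [E1, aux1 a hσ]
    simp only [Nat.cast_one]
    have hpow : τ ^ ((1:ℂ) + 1/2) = τ * τ ^ ((1:ℂ)/2) := by
      rw [cpow_add _ _ hτ0, cpow_one]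
    rw [hpow]
    have hE2' : ∑ ν ∈ Finset.range M,
        cexp (2 * π * I * μ * ((ν / Real.sqrt M : ℝ):ℂ)) * theta M 1 (ν/Real.sqrt M) τ
        = (∑' m : ℤ, (m:ℂ) * cexp (2*π*I*m*a + π*I*(m:ℂ)^2*σ)) / (Real.sqrt M:ℂ) := by
      rw [eq_div_iff hsMC, mul_comm]
      exact E2
    rw [hE2']
    set S := ∑' m : ℤ, (m:ℂ) * cexp (2*π*I*m*a + π*I*(m:ℂ)^2*σ) with hS
    set Q := (-I:ℂ) ^ ((1:ℂ)/2) with hQ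
    set T := τ ^ ((1:ℂ)/2) with hT
    set s := (Real.sqrt M:ℂ) with hs
    linear_combination (-(S)*σ) * hXY + (-(S)*Q*T*(s⁻¹)^2) * hσM
      + (-(S)*Q*T*σ*(s⁻¹)^2) * hsM2 + (S*Q*T*σ*(s*s⁻¹+1)) * hinv
end

section
/- For τ, w ∈ ℍ and F_{0,τ,w}(x) = √(i(w-τ)) · erf(-i√(πi(w-τ)) x) · e^{πi x² τ}, taking the derivative in x of the Fourier transform identity F(F_{0,τ,w})(x) = i^{1/2} w^{1/2} F_{0,-1/τ,-1/w}(x) yields F(F_{1,τ,w})(x) = i^{1/2} w^{1/2} (τ^{-1} F_{1,-1/τ,-1/w}(x) − (1/(πi)) · ((w−τ)/(τw)) · e^{−πi x²/w}), where F_{k,τ,w}(x) = √(i(w-τ)) x^k erf(-i√(πi(w-τ)) x) e^{πi x² τ}. -/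
open Complex MeasureTheory

/-- The error function `erf(z) = (2/√π) ∫₀^z e^{-t²} dt`, extended to complex arguments. -/
noncomputable def cerf (z : ℂ) : ℂ :=
  (2 / Real.sqrt Real.pi) * z * ∫ t in (0 : ℝ)..1, Complex.exp (-((t : ℂ) * z) ^ 2)

/-- Bringmann–Nazaroglu's function `F_{k,τ,w}(x)`. -/
noncomputable def Ffun (k : ℕ) (τ w : ℂ) (x : ℝ) : ℂ :=
  (Complex.I * (w - τ)) ^ ((1 : ℂ) / 2) * (x : ℂ) ^ k *
    cerf (-Complex.I * (Real.pi * Complex.I * (w - τ)) ^ ((1 : ℂ) / 2) * x) *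
    Complex.exp (Real.pi * Complex.I * (x : ℂ) ^ 2 * τ)

lemma cerf_eq_integral (b : ℂ) (x : ℝ) :
    cerf (b * x) = (2 / (Real.sqrt Real.pi : ℂ)) * b *
      ∫ s in (0:ℝ)..x, Complex.exp (-(b * s)^2) := by
  rcases eq_or_ne x 0 with rfl | hx
  · simp [cerf]
  · have h := intervalIntegral.integral_comp_mul_left
      (a := (0:ℝ)) (b := (1:ℝ)) (fun s : ℝ => Complex.exp (-(b * s)^2)) hx
    simp only [mul_zero, mul_one] at h
    have harg : ∀ t : ℝ, Complex.exp (-((t : ℂ) * (b * x)) ^ 2)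
        = Complex.exp (-(b * ((x * t : ℝ) : ℂ))^2) := by
      intro t; push_cast; ring_nf
    unfold cerf
    simp only [harg]
    rw [h]
    rw [real_smul]
    have hx' : (x:ℂ) ≠ 0 := Complex.ofReal_ne_zero.mpr hx
    have hs : ((Real.sqrt Real.pi : ℝ) : ℂ) ≠ 0 :=
      Complex.ofReal_ne_zero.mpr (ne_of_gt (Real.sqrt_pos.mpr Real.pi_pos))
    push_cast
    field_simp

lemma hasDerivAt_cerf_comp (b : ℂ) (x : ℝ) :
    HasDerivAt (fun x : ℝ => cerf (b * x))
      (2 / (Real.sqrt Real.pi : ℂ) * b * Complex.exp (-(b * x)^2)) x := by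
  have hcont : Continuous fun s : ℝ => Complex.exp (-(b * s)^2) := by
    fun_prop
  have H := ((hcont.integral_hasStrictDerivAt 0 x).hasDerivAt).const_mul
    (2 / (Real.sqrt Real.pi : ℂ) * b)
  exact H.congr_of_eventuallyEq (Filter.Eventually.of_forall fun y => cerf_eq_integral b y)

lemma norm_cerf_le (z : ℂ) :
    ‖cerf z‖ ≤ 2 / Real.sqrt Real.pi * ‖z‖ * Real.exp (max 0 (-(z^2).re)) := by
  have hbd : ∀ t ∈ Set.uIoc (0:ℝ) 1,
      ‖Complex.exp (-((t : ℂ) * z) ^ 2)‖ ≤ Real.exp (max 0 (-(z^2).re)) := by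
    intro t ht
    rw [Set.uIoc_of_le zero_le_one] at ht
    rw [Complex.norm_exp]
    apply Real.exp_le_exp.mpr
    have hre : (-((t : ℂ) * z) ^ 2).re = -(t^2 * (z^2).re) := by
      have : ((t : ℂ) * z) ^ 2 = ((t^2 : ℝ) : ℂ) * z^2 := by push_cast; ring
      rw [this]
      simp only [Complex.neg_re, Complex.re_ofReal_mul]
    rw [hre]
    rcases le_or_gt 0 (z^2).re with h | h
    · have : -(t^2 * (z^2).re) ≤ 0 := by nlinarith [sq_nonneg t]
      exact this.trans (le_max_left _ _)
    · have ht2 : t^2 ≤ 1 := by nlinarith [ht.1, ht.2]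
      have h1 : -(t^2 * (z^2).re) ≤ -(z^2).re := by
        nlinarith [mul_nonneg (sub_nonneg.mpr ht2) (neg_nonneg.mpr h.le)]
      exact h1.trans (le_max_right _ _)
  have hI := intervalIntegral.norm_integral_le_of_norm_le_const hbd
  simp only [sub_zero, abs_one, mul_one] at hI
  calc ‖cerf z‖ = ‖(2 / (Real.sqrt Real.pi : ℂ))‖ * ‖z‖ *
        ‖∫ t in (0:ℝ)..1, Complex.exp (-((t : ℂ) * z) ^ 2)‖ := by
        rw [cerf]; rw [norm_mul, norm_mul]
    _ ≤ 2 / Real.sqrt Real.pi * ‖z‖ * Real.exp (max 0 (-(z^2).re)) := by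
        have h2 : ‖(2 / (Real.sqrt Real.pi : ℂ))‖ = 2 / Real.sqrt Real.pi := by
          rw [norm_div]
          simp [Complex.norm_real, _root_.abs_of_nonneg (Real.sqrt_nonneg _)]
        rw [h2]
        exact mul_le_mul_of_nonneg_left hI (by positivity)

lemma sq_cpow_half (z : ℂ) : (z ^ ((1:ℂ)/2)) ^ 2 = z := by
  rcases eq_or_ne z 0 with rfl | hz
  · rw [Complex.zero_cpow (by norm_num : (1:ℂ)/2 ≠ 0)]
    simp
  · rw [sq, ← Complex.cpow_add _ _ hz]
    norm_num

lemma continuous_Ffun (k : ℕ) (τ w : ℂ) : Continuous (Ffun k τ w) := by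
  have hcerf : Continuous fun x : ℝ =>
      cerf (-Complex.I * ((Real.pi : ℂ) * Complex.I * (w - τ)) ^ ((1:ℂ)/2) * x) :=
    continuous_iff_continuousAt.mpr fun x =>
      (hasDerivAt_cerf_comp (-Complex.I * ((Real.pi : ℂ) * Complex.I * (w - τ)) ^ ((1:ℂ)/2)) x).continuousAt
  unfold Ffun
  apply Continuous.mul
  apply Continuous.mul
  · exact continuous_const.mul (Complex.continuous_ofReal.pow k)
  · exact hcerf
  · exact Complex.continuous_exp.comp (by fun_prop)

lemma integrable_Ffun (k : ℕ) (τ w : ℂ) (hτ : 0 < τ.im) (hw : 0 < w.im) :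
    Integrable (Ffun k τ w) := by
  set A := (Complex.I * (w - τ)) ^ ((1:ℂ)/2) with hA
  set v := ((Real.pi : ℂ) * Complex.I * (w - τ)) ^ ((1:ℂ)/2) with hv
  set b := -Complex.I * v with hbdef
  have hv2 : v ^ 2 = (Real.pi : ℂ) * Complex.I * (w - τ) := sq_cpow_half _
  have hb2 : (b ^ 2).re = Real.pi * (w.im - τ.im) := by
    have hb2' : b ^ 2 = -((Real.pi:ℂ) * Complex.I * (w - τ)) := by
      have : b ^ 2 = (Complex.I)^2 * v^2 := by rw [hbdef]; ring
      rw [this, Complex.I_sq, hv2]; ring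
    rw [hb2']
    simp [Complex.mul_re, Complex.mul_im]
  set m := min τ.im w.im with hm
  have hm0 : 0 < Real.pi * m := mul_pos Real.pi_pos (lt_min hτ hw)
  set K := ‖A‖ * (2 / Real.sqrt Real.pi) * ‖b‖ with hK
  have hint : Integrable (fun y : ℝ =>
      K * (|y| ^ (k+1) * Real.exp (-(Real.pi * m) * y^2))) := by
    apply Integrable.const_mul
    have hs : (-1:ℝ) < ((k : ℝ) + 1) := by
      have : (0:ℝ) ≤ (k:ℝ) := Nat.cast_nonneg k
      linarith
    have h := (integrable_rpow_mul_exp_neg_mul_sq hm0 hs).abs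
    refine h.congr (Filter.Eventually.of_forall fun y => ?_)
    have hy : (y : ℝ) ^ ((k : ℝ) + 1) = y ^ (k+1) := by
      rw [show ((k:ℝ) + 1) = ((k+1 : ℕ) : ℝ) by push_cast; ring, Real.rpow_natCast]
    show |y ^ ((k:ℝ) + 1) * Real.exp (-(Real.pi * m) * y ^ 2)|
        = |y| ^ (k+1) * Real.exp (-(Real.pi * m) * y ^ 2)
    rw [hy, abs_mul, _root_.abs_pow, _root_.abs_of_nonneg (Real.exp_pos _).le]
  refine hint.mono' (continuous_Ffun k τ w).aestronglyMeasurable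
    (Filter.Eventually.of_forall fun y => ?_)
  have hexp : ‖Complex.exp ((Real.pi:ℂ) * Complex.I * (y:ℂ)^2 * τ)‖
      = Real.exp (-(Real.pi * τ.im) * y^2) := by
    rw [Complex.norm_exp]
    congr 1
    simp [Complex.mul_re, Complex.mul_im, ← Complex.ofReal_pow]
    ring
  have hzre : (((b * (y:ℂ))^2).re) = (b^2).re * y^2 := by
    have h1 : (b * (y:ℂ))^2 = b^2 * ((y^2 : ℝ) : ℂ) := by push_cast; ring
    rw [h1, Complex.mul_re]
    simp [← Complex.ofReal_pow]
  have hmax : Real.exp (max 0 (-((b*(y:ℂ))^2).re)) * Real.exp (-(Real.pi * τ.im) * y^2)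
      ≤ Real.exp (-(Real.pi*m)*y^2) := by
    rw [← Real.exp_add, Real.exp_le_exp, hzre, hb2]
    rcases le_total τ.im w.im with h | h
    · have h1 : (-(Real.pi * (w.im - τ.im) * y ^ 2)) ≤ 0 := by
        have := mul_nonneg (mul_nonneg Real.pi_pos.le (sub_nonneg.mpr h)) (sq_nonneg y)
        linarith
      rw [max_eq_left h1, hm, min_eq_left h]
      exact le_of_eq (by ring)
    · have h1 : (0:ℝ) ≤ -(Real.pi * (w.im - τ.im) * y ^ 2) := by
        have := mul_nonneg (mul_nonneg Real.pi_pos.le (sub_nonneg.mpr (by linarith : (0:ℝ) ≤ τ.im - w.im))) (sq_nonneg y)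
        nlinarith
      rw [max_eq_right h1, hm, min_eq_right h]
      exact le_of_eq (by ring)
  have hcb : ‖cerf (b * (y:ℂ))‖ ≤ 2 / Real.sqrt Real.pi * (‖b‖ * |y|) *
      Real.exp (max 0 (-((b*(y:ℂ))^2).re)) := by
    have := norm_cerf_le (b * (y:ℂ))
    rwa [norm_mul, Complex.norm_real, Real.norm_eq_abs] at this
  calc ‖Ffun k τ w y‖
      = ‖A‖ * |y|^k * ‖cerf (b * (y:ℂ))‖ * Real.exp (-(Real.pi * τ.im) * y^2) := by
        simp only [Ffun, ← hA, ← hv, ← hbdef]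
        rw [norm_mul, norm_mul, norm_mul, hexp, norm_pow, Complex.norm_real, Real.norm_eq_abs]
    _ ≤ ‖A‖ * |y|^k * (2 / Real.sqrt Real.pi * (‖b‖ * |y|) *
          Real.exp (max 0 (-((b*(y:ℂ))^2).re))) * Real.exp (-(Real.pi * τ.im) * y^2) := by
        gcongr
    _ ≤ K * (|y| ^ (k+1) * Real.exp (-(Real.pi*m)*y^2)) := by
        have h2 : ‖A‖ * |y|^k * (2 / Real.sqrt Real.pi * (‖b‖ * |y|) *
              Real.exp (max 0 (-((b*(y:ℂ))^2).re))) * Real.exp (-(Real.pi * τ.im) * y^2)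
            = K * |y|^(k+1) * (Real.exp (max 0 (-((b*(y:ℂ))^2).re)) *
              Real.exp (-(Real.pi * τ.im) * y^2)) := by
          rw [hK]; ring
        rw [h2]
        conv_rhs => rw [← mul_assoc]
        exact mul_le_mul_of_nonneg_left hmax (by positivity)

lemma hasDerivAt_Ffun0 (τ w : ℂ) (x : ℝ) :
    HasDerivAt (fun x : ℝ => Ffun 0 τ w x)
      (2 * (Real.pi:ℂ) * Complex.I * τ * (x:ℂ) * Ffun 0 τ w x +
        2 / (Real.sqrt Real.pi : ℂ) *
          ((Complex.I * (w - τ)) ^ ((1:ℂ)/2) *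
            (-Complex.I * ((Real.pi:ℂ) * Complex.I * (w - τ)) ^ ((1:ℂ)/2))) *
          Complex.exp ((Real.pi:ℂ) * Complex.I * (x:ℂ)^2 * w)) x := by
  set A := (Complex.I * (w - τ)) ^ ((1:ℂ)/2) with hA
  set v := ((Real.pi : ℂ) * Complex.I * (w - τ)) ^ ((1:ℂ)/2) with hv
  set b := -Complex.I * v with hbdef
  have hv2 : v ^ 2 = (Real.pi : ℂ) * Complex.I * (w - τ) := sq_cpow_half _
  have hb2' : b ^ 2 = -((Real.pi:ℂ) * Complex.I * (w - τ)) := by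
    have : b ^ 2 = (Complex.I)^2 * v^2 := by rw [hbdef]; ring
    rw [this, Complex.I_sq, hv2]; ring
  have h1 := hasDerivAt_cerf_comp b x
  have hpoly : HasDerivAt (fun z : ℂ => (Real.pi:ℂ) * Complex.I * z^2 * τ)
      ((Real.pi:ℂ) * Complex.I * (2*(x:ℂ)) * τ) (x:ℂ) := by
    have := ((hasDerivAt_pow 2 ((x:ℝ):ℂ)).const_mul ((Real.pi:ℂ) * Complex.I)).mul_const τ
    simpa [pow_one] using this
  have h2 : HasDerivAt (fun x : ℝ => Complex.exp ((Real.pi:ℂ) * Complex.I * (x:ℂ)^2 * τ))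
      (Complex.exp ((Real.pi:ℂ) * Complex.I * (x:ℂ)^2 * τ) * ((Real.pi:ℂ) * Complex.I * (2*(x:ℂ)) * τ)) x :=
    (hpoly.cexp).comp_ofReal
  have h3 := (h1.mul h2).const_mul A
  have hfun : (fun x : ℝ => Ffun 0 τ w x)
      = (fun x : ℝ => A * (cerf (b * x) * Complex.exp ((Real.pi:ℂ) * Complex.I * (x:ℂ)^2 * τ))) := by
    funext y
    simp only [Ffun, ← hA, ← hv, ← hbdef, pow_zero, mul_one]
    ring
  rw [hfun]
  convert h3 using 1
  · rfl
  · rfl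
  have hprod : Complex.exp (-(b*(x:ℂ))^2) * Complex.exp ((Real.pi:ℂ) * Complex.I * (x:ℂ)^2 * τ)
      = Complex.exp ((Real.pi:ℂ) * Complex.I * (x:ℂ)^2 * w) := by
    rw [← Complex.exp_add]
    congr 1
    linear_combination (-(x:ℂ)^2) * hb2'
  simp only [Ffun, ← hA, ← hv, ← hbdef, pow_zero, mul_one]
  linear_combination (-(A * (2 / (Real.sqrt Real.pi : ℂ)) * b)) * hprod

lemma cpow_half_ofReal_mul {r : ℝ} (hr : 0 < r) {z : ℂ} (hz : z ≠ 0) :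
    ((r:ℂ) * z) ^ ((1:ℂ)/2) = (Real.sqrt r : ℂ) * z ^ ((1:ℂ)/2) := by
  have hr' : (r:ℂ) ≠ 0 := Complex.ofReal_ne_zero.mpr hr.ne'
  rw [Complex.cpow_def_of_ne_zero (mul_ne_zero hr' hz), Complex.cpow_def_of_ne_zero hz,
    Complex.log_ofReal_mul hr hz, add_mul, Complex.exp_add]
  congr 1
  rw [show ((Real.log r : ℂ)) * ((1:ℂ)/2) = ((Real.log r * (1/2) : ℝ) : ℂ) by push_cast; ring,
    ← Complex.ofReal_exp]
  congr 1
  rw [Real.sqrt_eq_rpow, Real.rpow_def_of_pos hr]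

theorem fourier_F_one (τ w : ℂ) (hτ : 0 < τ.im) (hw : 0 < w.im)
    (h0 : ∀ x : ℝ, (∫ y : ℝ, Ffun 0 τ w y * Complex.exp (-(2 * Real.pi * Complex.I * x * y))) =
      Complex.I ^ ((1 : ℂ) / 2) * w ^ ((1 : ℂ) / 2) * Ffun 0 (-1 / τ) (-1 / w) x) :
    ∀ x : ℝ, (∫ y : ℝ, Ffun 1 τ w y * Complex.exp (-(2 * Real.pi * Complex.I * x * y))) =
      Complex.I ^ ((1 : ℂ) / 2) * w ^ ((1 : ℂ) / 2) *
        (τ⁻¹ * Ffun 1 (-1 / τ) (-1 / w) x -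
          (1 / (Real.pi * Complex.I)) * ((w - τ) / (τ * w)) *
            Complex.exp (-(Real.pi * Complex.I * (x : ℂ) ^ 2) / w)) := by
  have hτ0 : τ ≠ 0 := by intro h; rw [h] at hτ; simp at hτ
  have hw0 : w ≠ 0 := by intro h; rw [h] at hw; simp at hw
  have hconv : ∀ (k : ℕ) (x : ℝ),
      (∫ y : ℝ, Ffun k τ w y * Complex.exp (-(2 * Real.pi * Complex.I * x * y)))
        = FourierTransform.fourier (Ffun k τ w) x := by
    intro k x
    rw [Real.fourier_real_eq_integral_exp_smul]
    congr 1
    funext v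
    rw [smul_eq_mul, mul_comm]
    congr 1
    push_cast
    ring
  intro x
  rcases eq_or_ne w τ with rfl | hwτ
  · have hz : ∀ (k : ℕ) (u : ℂ) (y : ℝ), Ffun k u u y = 0 := by
      intro k u y
      simp [Ffun, sub_self, Complex.zero_cpow (by norm_num : (1:ℂ)/2 ≠ 0)]
    simp [hz]
  set τ' := -1/τ with hτ'def
  set w' := -1/w with hw'def
  set c := Complex.I ^ ((1:ℂ)/2) * w ^ ((1:ℂ)/2) with hc
  have h0' : FourierTransform.fourier (Ffun 0 τ w) = fun y : ℝ => c * Ffun 0 τ' w' y := by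
    funext y
    rw [← hconv 0 y]
    exact h0 y
  have hint0 : Integrable (Ffun 0 τ w) := integrable_Ffun 0 τ w hτ hw
  have hint1 : Integrable (fun y : ℝ => y • Ffun 0 τ w y) := by
    refine (integrable_Ffun 1 τ w hτ hw).congr (Filter.Eventually.of_forall fun y => ?_)
    simp only [Ffun, pow_one, pow_zero, mul_one, Complex.real_smul]
    ring
  have hF := Real.hasDerivAt_fourier hint0 hint1 x
  rw [h0'] at hF
  have hG := (hasDerivAt_Ffun0 τ' w' x).const_mul c
  have huniq := hF.unique hG
  have hD : FourierTransform.fourier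
        (fun y : ℝ => (-2 * (Real.pi:ℂ) * Complex.I * (y:ℂ)) • Ffun 0 τ w y) x
      = (-2 * (Real.pi:ℂ) * Complex.I) * FourierTransform.fourier (Ffun 1 τ w) x := by
    rw [Real.fourier_real_eq, Real.fourier_real_eq, ← integral_const_mul]
    congr 1
    funext v
    simp only [Circle.smul_def, smul_eq_mul, Ffun, pow_one, pow_zero, mul_one]
    ring
  rw [hD] at huniq
  rw [hconv 1 x]
  have hwt : w' - τ' = (w - τ)/(τ * w) := by
    rw [hτ'def, hw'def]
    field_simp
    ring
  have hz' : Complex.I * (w' - τ') ≠ 0 := by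
    rw [hwt]
    exact mul_ne_zero Complex.I_ne_zero
      (div_ne_zero (sub_ne_zero.mpr hwτ) (mul_ne_zero hτ0 hw0))
  have hAb : (Complex.I * (w' - τ')) ^ ((1:ℂ)/2) *
      (-Complex.I * ((Real.pi:ℂ) * Complex.I * (w' - τ')) ^ ((1:ℂ)/2))
      = (Real.sqrt Real.pi : ℂ) * (w' - τ') := by
    have hsplit : ((Real.pi:ℂ) * Complex.I * (w' - τ')) ^ ((1:ℂ)/2)
        = (Real.sqrt Real.pi : ℂ) * (Complex.I * (w' - τ')) ^ ((1:ℂ)/2) := by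
      rw [mul_assoc]
      exact cpow_half_ofReal_mul Real.pi_pos hz'
    rw [hsplit]
    have hsq : (Complex.I * (w' - τ')) ^ ((1:ℂ)/2) * (Complex.I * (w' - τ')) ^ ((1:ℂ)/2)
        = Complex.I * (w' - τ') := by
      have := sq_cpow_half (Complex.I * (w' - τ'))
      rwa [sq] at this
    linear_combination (-Complex.I * ((Real.sqrt Real.pi : ℂ))) * hsq +
      (-((Real.sqrt Real.pi : ℂ)) * (w' - τ')) * Complex.I_sq
  have hf1 : Ffun 1 τ' w' x = (x:ℂ) * Ffun 0 τ' w' x := by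
    simp only [Ffun, pow_one, pow_zero, mul_one]
    ring
  have hexp2 : Complex.exp ((Real.pi:ℂ) * Complex.I * (x:ℂ)^2 * w')
      = Complex.exp (-((Real.pi:ℂ) * Complex.I * (x:ℂ)^2) / w) := by
    rw [hw'def]
    congr 1
    field_simp
  have hπI : (-2 * (Real.pi:ℂ) * Complex.I) ≠ 0 := by
    simp [Real.pi_ne_zero, Complex.I_ne_zero]
  have hs : ((Real.sqrt Real.pi : ℝ) : ℂ) ≠ 0 :=
    Complex.ofReal_ne_zero.mpr (ne_of_gt (Real.sqrt_pos.mpr Real.pi_pos))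
  have hπ : ((Real.pi : ℝ) : ℂ) ≠ 0 := Complex.ofReal_ne_zero.mpr Real.pi_ne_zero
  refine mul_left_cancel₀ hπI ?_
  rw [huniq, hAb, hf1, hexp2, hwt, hτ'def]
  field_simp
  ring
end

section
/- For k ≥ 0, μ ∈ L'/L, τ, w ∈ ℍ, the summand of the bivariate theta function satisfies the bound |n^k · erf(−i√(πi(w−τ)) n) · e^{πi n² τ}| ≤ 2|w−τ|^{1/2} · n^{k+1} · e^{−π n² min(Im τ, Im w)} for n > 0; consequently the series Θ̂_{k,μ}(τ,w) = Σ_{n ∈ L+μ} n^k erf(−i√(πi(w−τ)) n) e^{πi n² τ} converges absolutely. -/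
open Complex MeasureTheory

/-- The summand of the bivariate theta function `Θ̂_{k,μ}(τ,w)` at `n`. -/
noncomputable def ThetaHatSummand (k : ℕ) (τ w : ℂ) (n : ℝ) : ℂ :=
  (n : ℂ) ^ k * cerf (-Complex.I * (Real.pi * Complex.I * (w - τ)) ^ ((1 : ℂ) / 2) * n) *
    Complex.exp (Real.pi * Complex.I * (n : ℂ) ^ 2 * τ)

lemma thetaHat_bound_abs (k : ℕ) (τ w : ℂ) (hτ : 0 < τ.im) (hw : 0 < w.im) (n : ℝ) :
    ‖ThetaHatSummand k τ w n‖ ≤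
      2 * ‖w - τ‖ ^ ((1 : ℝ) / 2) * |n| ^ (k + 1) *
        Real.exp (-Real.pi * n ^ 2 * min τ.im w.im) := by
  by_cases hwτ : w = τ
  · subst hwτ
    simp [ThetaHatSummand, cerf]
  set c₀ : ℂ := Real.pi * Complex.I * (w - τ) with hc₀
  have hc₀ne : c₀ ≠ 0 := by
    simp [hc₀, sub_eq_zero, hwτ, Real.pi_ne_zero, Complex.I_ne_zero]
  set s : ℂ := c₀ ^ ((1 : ℂ) / 2) with hs
  have hs_abs : ‖s‖ = (Real.pi * ‖w - τ‖) ^ ((1:ℝ)/2) := by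
    rw [hs, Complex.norm_cpow_of_ne_zero hc₀ne]
    simp [hc₀, Complex.norm_of_nonneg Real.pi_pos.le, abs_of_pos Real.pi_pos]
  have hs_sq : s ^ 2 = c₀ := by
    rw [hs]
    simpa using Complex.cpow_nat_inv_pow c₀ (two_ne_zero)
  set z : ℂ := -Complex.I * s * n with hz
  set E : ℝ := Real.exp (Real.pi * n ^ 2 * (τ.im - min τ.im w.im)) with hE
  have hz2 : z ^ 2 = -(((n:ℂ))^2 * c₀) := by
    calc z^2 = (-Complex.I)^2 * s^2 * (n:ℂ)^2 := by rw [hz]; ring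
    _ = -((n:ℂ)^2 * c₀) := by rw [hs_sq]; simp [Complex.I_sq]; ring
  -- bound the integral
  have hint : ‖∫ t in (0:ℝ)..1, Complex.exp (-((t : ℂ) * z) ^ 2)‖ ≤ E := by
    have := intervalIntegral.norm_integral_le_of_norm_le_const
      (a := (0:ℝ)) (b := 1) (C := E)
      (f := fun t : ℝ => Complex.exp (-((t : ℂ) * z) ^ 2)) ?_
    · simpa using this
    · intro t ht
      rw [Set.uIoc_of_le zero_le_one] at ht
      have hexp : -((t : ℂ) * z) ^ 2 = ((t^2 * n^2 : ℝ) : ℂ) * c₀ := by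
        have : -((t : ℂ) * z) ^ 2 = -((t:ℂ)^2 * z^2) := by ring
        rw [this, hz2]
        push_cast
        ring
      rw [Complex.norm_exp, hexp, Complex.re_ofReal_mul, hE,
        Real.exp_le_exp]
      have hc₀re : c₀.re = -(Real.pi * (w.im - τ.im)) := by
        simp [hc₀, Complex.mul_re, Complex.mul_im]
      rw [hc₀re]
      have ht0 : 0 < t := ht.1
      have h1t : t^2 ≤ 1 := by nlinarith [ht.2]
      rcases le_total τ.im w.im with h | h
      · rw [min_eq_left h]
        nlinarith [mul_nonneg (mul_nonneg (mul_nonneg (sq_nonneg t) (sq_nonneg n))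
          Real.pi_pos.le) (sub_nonneg.2 h)]
      · rw [min_eq_right h]
        nlinarith [mul_nonneg (mul_nonneg (mul_nonneg Real.pi_pos.le (sq_nonneg n))
          (sub_nonneg.2 h)) (sub_nonneg.2 h1t)]
  have hnorm : ‖ThetaHatSummand k τ w n‖
      = |n|^k * ‖cerf z‖ * Real.exp (-(Real.pi * n^2 * τ.im)) := by
    rw [ThetaHatSummand, norm_mul, norm_mul]
    congr 1
    · congr 1
      simp [Complex.norm_real, Real.norm_eq_abs]
    · rw [Complex.norm_exp]
      congr 1
      rw [show (Real.pi : ℂ) * Complex.I * (n:ℂ)^2 * τ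
          = ((Real.pi * n^2 : ℝ) : ℂ) * (Complex.I * τ) by push_cast; ring,
        Complex.re_ofReal_mul]
      simp [Complex.mul_re]
  have hcerf : ‖cerf z‖ ≤ (2 / Real.sqrt Real.pi) * (‖s‖ * |n|) * E := by
    rw [cerf, norm_mul, norm_mul]
    have h1 : ‖((2 : ℂ) / (Real.sqrt Real.pi : ℂ))‖ = 2 / Real.sqrt Real.pi := by
      rw [norm_div]
      simp [Complex.norm_real, Real.norm_eq_abs,
        _root_.abs_of_nonneg (Real.sqrt_nonneg Real.pi)]
    have h2 : ‖z‖ = ‖s‖ * |n| := by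
      rw [hz, norm_mul, norm_mul]
      simp [Complex.norm_of_nonneg, Real.norm_eq_abs]
    rw [h1, h2]
    have hE0 : (0:ℝ) ≤ 2 / Real.sqrt Real.pi * (‖s‖ * |n|) := by positivity
    exact mul_le_mul_of_nonneg_left hint hE0
  rw [hnorm]
  calc |n|^k * ‖cerf z‖ * Real.exp (-(Real.pi * n^2 * τ.im))
      ≤ |n|^k * ((2 / Real.sqrt Real.pi) * (‖s‖ * |n|) * E) *
        Real.exp (-(Real.pi * n^2 * τ.im)) := by gcongr
    _ = 2 * ‖w - τ‖ ^ ((1 : ℝ) / 2) * |n| ^ (k + 1) *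
        Real.exp (-Real.pi * n ^ 2 * min τ.im w.im) := by
      have hπ : (0:ℝ) < Real.sqrt Real.pi := Real.sqrt_pos.2 Real.pi_pos
      rw [hs_abs, Real.mul_rpow Real.pi_pos.le (norm_nonneg _),
        ← Real.sqrt_eq_rpow, hE]
      calc |n|^k * (2 / Real.sqrt Real.pi *
            (Real.sqrt Real.pi * ‖w - τ‖ ^ ((1:ℝ)/2) * |n|) *
            Real.exp (Real.pi * n ^ 2 * (τ.im - min τ.im w.im))) *
            Real.exp (-(Real.pi * n ^ 2 * τ.im))
          = 2 * ‖w - τ‖ ^ ((1:ℝ)/2) * |n|^(k+1) *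
            (Real.exp (Real.pi * n ^ 2 * (τ.im - min τ.im w.im)) *
             Real.exp (-(Real.pi * n ^ 2 * τ.im))) *
            (Real.sqrt Real.pi / Real.sqrt Real.pi) := by ring
        _ = 2 * ‖w - τ‖ ^ ((1 : ℝ) / 2) * |n| ^ (k + 1) *
            Real.exp (-Real.pi * n ^ 2 * min τ.im w.im) := by
            rw [div_self hπ.ne', mul_one, ← Real.exp_add]
            congr 1
            ring

theorem thetaHat_summand_bound_and_summable (M : ℕ) (hM : 0 < M) (μ : ℝ) (k : ℕ)
    (τ w : ℂ) (hτ : 0 < τ.im) (hw : 0 < w.im) :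
    (∀ n : ℝ, 0 < n →
      ‖ThetaHatSummand k τ w n‖ ≤
        2 * ‖w - τ‖ ^ ((1 : ℝ) / 2) * n ^ (k + 1) *
          Real.exp (-Real.pi * n ^ 2 * min τ.im w.im)) ∧
    Summable (fun n : ℤ => ‖ThetaHatSummand k τ w (Real.sqrt M * n + μ)‖) := by
  constructor
  · intro n hn
    have := thetaHat_bound_abs k τ w hτ hw n
    rwa [abs_of_pos hn] at this
  · set a : ℝ := Real.sqrt M with ha_def
    have ha : 0 < a := Real.sqrt_pos.2 (by exact_mod_cast hM)
    set c : ℝ := min τ.im w.im with hc_def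
    have hc : 0 < c := lt_min hτ hw
    set R : ℝ := ‖w - τ‖ ^ ((1:ℝ)/2) with hR
    have hR0 : 0 ≤ R := Real.rpow_nonneg (norm_nonneg _) _
    set C : ℝ := 2 * R * (a + |μ|) ^ (k+1) with hC
    have hT : 0 < c * a ^ 2 := by positivity
    have hsum : Summable (fun m : ℤ => C * (|(m:ℝ)| ^ (k+1) *
        Real.exp (-Real.pi * (c * a^2 * (m:ℝ)^2 - 2 * (c * a * |μ|) * |(m:ℝ)|)))) := by
      have := (summable_pow_mul_jacobiTheta₂_term_bound (c * a * |μ|) hT (k+1)).mul_left C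
      simpa [mul_assoc] using this
    refine hsum.of_norm_bounded_eventually ?_
    have hfin : ({(0:ℤ)} : Set ℤ).Finite := Set.finite_singleton _
    filter_upwards [hfin.eventually_cofinite_notMem] with m hm
    have hmz : m ≠ 0 := by simpa using hm
    have hm1 : (1:ℝ) ≤ |(m:ℝ)| := by exact_mod_cast Int.one_le_abs hmz
    have h1 := thetaHat_bound_abs k τ w hτ hw (a * m + μ)
    rw [Real.norm_eq_abs, _root_.abs_of_nonneg (norm_nonneg _)]
    refine h1.trans ?_
    have hxle : |a * (m:ℝ) + μ| ≤ (a + |μ|) * |(m:ℝ)| := by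
      calc |a * (m:ℝ) + μ| ≤ |a * (m:ℝ)| + |μ| := abs_add_le _ _
        _ = a * |(m:ℝ)| + |μ| := by rw [abs_mul, _root_.abs_of_pos ha]
        _ ≤ a * |(m:ℝ)| + |μ| * |(m:ℝ)| := by nlinarith [abs_nonneg μ]
        _ = (a + |μ|) * |(m:ℝ)| := by ring
    have h2 : -( |μ| * |(m:ℝ)| ) ≤ μ * (m:ℝ) := by
      have := neg_abs_le (μ * (m:ℝ)); rwa [abs_mul] at this
    have hx2 : a^2 * (m:ℝ)^2 - 2 * a * |μ| * |(m:ℝ)| ≤ (a * m + μ)^2 := by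
      nlinarith [mul_le_mul_of_nonneg_left h2 ha.le, sq_nonneg μ]
    have hexple : -Real.pi * (a * (m:ℝ) + μ)^2 * c
        ≤ -Real.pi * (c * a^2 * (m:ℝ)^2 - 2 * (c * a * |μ|) * |(m:ℝ)|) := by
      nlinarith [Real.pi_pos, hc.le, mul_le_mul_of_nonneg_left hx2 hc.le]
    calc 2 * R * |a * (m:ℝ) + μ| ^ (k+1) * Real.exp (-Real.pi * (a * (m:ℝ) + μ)^2 * c)
        ≤ 2 * R * ((a + |μ|) * |(m:ℝ)|) ^ (k+1) *
          Real.exp (-Real.pi * (c * a^2 * (m:ℝ)^2 - 2 * (c * a * |μ|) * |(m:ℝ)|)) := by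
          gcongr
        _ = C * (|(m:ℝ)| ^ (k+1) *
          Real.exp (-Real.pi * (c * a^2 * (m:ℝ)^2 - 2 * (c * a * |μ|) * |(m:ℝ)|))) := by
          rw [hC, mul_pow]; ring
end

section
/- Assume Re(τ) ≠ Re(w) for τ, w ∈ ℍ. For k ≥ 0, the bivariate false theta function Θ̂_{k,μ}(τ,w) = Σ_{n ∈ L+μ} n^k erf(−i√(πi(w−τ)) n) e^{πi n² τ} admits the integral expression Θ̂_{k,μ}(τ,w) = −i·sgn(Re(w−τ)) ∫_τ^w θ_{k+1,μ}(z) / √(−i(z−τ)) dz, where the integration path is the line segment from τ to w. -/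
open Complex MeasureTheory

/-- The bivariate (false) theta function `Θ̂_{k,μ}(τ,w)`. -/
noncomputable def ThetaHat (M : ℕ) (k : ℕ) (μ : ℝ) (τ w : ℂ) : ℂ :=
  ∑' n : ℤ, ((Real.sqrt M * n + μ : ℝ) : ℂ) ^ k *
    cerf (-Complex.I * (Real.pi * Complex.I * (w - τ)) ^ ((1 : ℂ) / 2) *
      ((Real.sqrt M * n + μ : ℝ) : ℂ)) *
    Complex.exp (Real.pi * Complex.I * ((Real.sqrt M * n + μ : ℝ) : ℂ) ^ 2 * τ)

/-! ### Auxiliary lemmas on complex square roots -/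

lemma cpow_half_ne_zero {z : ℂ} (hz : z ≠ 0) : z ^ ((1:ℂ)/2) ≠ 0 := by
  simp [Complex.cpow_eq_zero_iff, hz]

lemma cpow_half_mul_self {z : ℂ} (hz : z ≠ 0) : z ^ ((1:ℂ)/2) * z ^ ((1:ℂ)/2) = z := by
  rw [← Complex.cpow_add _ _ hz]
  norm_num

/-- A positive real scalar pulls out of `cpow (1/2)` as its square root. -/
lemma ofReal_mul_cpow_half {r : ℝ} (hr : 0 < r) {z : ℂ} (hz : z ≠ 0) :
    ((r : ℂ) * z) ^ ((1:ℂ)/2) = (Real.sqrt r : ℂ) * z ^ ((1:ℂ)/2) := by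
  have hrz : (r:ℂ) * z ≠ 0 := mul_ne_zero (Complex.ofReal_ne_zero.mpr hr.ne') hz
  rw [Complex.cpow_def_of_ne_zero hrz, Complex.cpow_def_of_ne_zero hz,
    Complex.log_ofReal_mul hr hz, add_mul, Complex.exp_add]
  congr 1
  rw [show ((Real.log r : ℂ)) * (1/2) = ((Real.log r * (1/2) : ℝ) : ℂ) by push_cast; ring,
    ← Complex.ofReal_exp]
  norm_num [Real.sqrt_eq_rpow, Real.rpow_def_of_pos hr]

lemma exp_half_pi_I : Complex.exp ((Real.pi : ℂ) * Complex.I * (1/2)) = Complex.I := by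
  rw [show ((Real.pi : ℂ)) * Complex.I * (1/2) = ((Real.pi/2 : ℝ) : ℂ) * Complex.I by
      push_cast; ring, Complex.exp_mul_I, ← Complex.ofReal_cos, ← Complex.ofReal_sin,
    Real.cos_pi_div_two, Real.sin_pi_div_two]
  simp

/-- Branch relation for positive real part. -/
lemma I_mul_cpow_half_of_pos {u : ℂ} (hu : 0 < u.re) :
    (Complex.I * u) ^ ((1:ℂ)/2) = Complex.I * (-Complex.I * u) ^ ((1:ℂ)/2) := by
  have hu0 : u ≠ 0 := fun h => by simp [h] at hu
  have hmiu : -Complex.I * u ≠ 0 := mul_ne_zero (neg_ne_zero.mpr Complex.I_ne_zero) hu0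
  have hiu : Complex.I * u ≠ 0 := mul_ne_zero Complex.I_ne_zero hu0
  have harg : (-Complex.I * u).im < 0 := by
    simp [Complex.mul_im, Complex.I_re, Complex.I_im]
    linarith
  have hargneg : Complex.arg (-Complex.I * u) < 0 := Complex.arg_neg_iff.mpr harg
  have hlog : Complex.log (Complex.I * u) =
      Complex.log (-1) + Complex.log (-Complex.I * u) := by
    rw [show Complex.I * u = (-1) * (-Complex.I * u) by ring]
    refine Complex.log_mul (by norm_num) hmiu ?_
    rw [Complex.arg_neg_one]
    constructor
    · have := Complex.neg_pi_lt_arg (-Complex.I * u)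
      linarith [Real.pi_pos]
    · linarith
  rw [Complex.cpow_def_of_ne_zero hiu, Complex.cpow_def_of_ne_zero hmiu, hlog,
    Complex.log_neg_one, add_mul, Complex.exp_add, exp_half_pi_I]

/-- The key branch lemma: `√(iu) = sgn(Re u) · i · √(-iu)`. -/
lemma I_mul_cpow_half {u : ℂ} (hu : u.re ≠ 0) :
    (Complex.I * u) ^ ((1:ℂ)/2) =
      (Real.sign u.re : ℂ) * Complex.I * (-Complex.I * u) ^ ((1:ℂ)/2) := by
  rcases hu.lt_or_gt with h | h
  · have h2 := I_mul_cpow_half_of_pos (u := -u) (by simp [Complex.neg_re]; linarith)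
    rw [show Complex.I * -u = -Complex.I * u by ring, show -Complex.I * -u = Complex.I * u
      by ring] at h2
    rw [Real.sign_of_neg h, h2]
    push_cast
    linear_combination ((Complex.I * u) ^ ((1:ℂ)/2)) * Complex.I_mul_I
  · rw [Real.sign_of_pos h, I_mul_cpow_half_of_pos h]
    push_cast
    ring

/-- Norm of the exponential factors appearing in theta series. -/
lemma norm_exp_aux (x : ℝ) (z : ℂ) :
    ‖Complex.exp ((Real.pi:ℂ) * Complex.I * (x:ℂ)^2 * z)‖ =
      Real.exp (-(Real.pi * x^2 * z.im)) := by
  rw [Complex.norm_exp]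
  congr 1
  rw [show (Real.pi:ℂ) * Complex.I * (x:ℂ)^2 * z = ((Real.pi * x^2 : ℝ) : ℂ) * (Complex.I * z)
    by push_cast; ring]
  simp [Complex.mul_re, Complex.mul_im, pow_two]

lemma norm_cpow_half {z : ℂ} (hz : z ≠ 0) :
    ‖z ^ ((1:ℂ)/2)‖ = ‖z‖ ^ ((1:ℝ)/2) := by
  rw [Complex.norm_cpow_of_ne_zero hz]
  norm_num

/-- The image of `(0,1]` under squaring. -/
lemma sq_image_Ioc : (fun s : ℝ => s ^ 2) '' Set.Ioc 0 1 = Set.Ioc (0:ℝ) 1 := by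
  ext y
  constructor
  · rintro ⟨s, ⟨hs0, hs1⟩, rfl⟩
    constructor
    · show (0:ℝ) < s ^ 2
      positivity
    · show s ^ 2 ≤ 1
      nlinarith
  · rintro ⟨hy0, hy1⟩
    exact ⟨Real.sqrt y, ⟨Real.sqrt_pos.mpr hy0, Real.sqrt_le_one.mpr hy1⟩, Real.sq_sqrt hy0.le⟩

/-- Per-term integral identity. -/
lemma per_n_identity (k : ℕ) (τ u : ℂ) (hu : u.re ≠ 0) (x : ℝ) :
    (x:ℂ)^k * cerf (-Complex.I * ((Real.pi:ℂ) * Complex.I * u) ^ ((1:ℂ)/2) * (x:ℂ)) *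
      Complex.exp ((Real.pi:ℂ) * Complex.I * (x:ℂ)^2 * τ) =
    -Complex.I * (Real.sign u.re : ℂ) *
      ∫ t in (0:ℝ)..1,
        (x:ℂ)^(k+1) * Complex.exp ((Real.pi:ℂ) * Complex.I * (x:ℂ)^2 * (τ + (t:ℂ)*u)) /
          (-Complex.I * ((t:ℂ)*u)) ^ ((1:ℂ)/2) * u := by
  have hu0 : u ≠ 0 := fun h => hu (by simp [h])
  have hmiu : -Complex.I * u ≠ 0 := mul_ne_zero (neg_ne_zero.mpr Complex.I_ne_zero) hu0
  have hiu : Complex.I * u ≠ 0 := mul_ne_zero Complex.I_ne_zero hu0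
  have hπ : (0:ℝ) < Real.pi := Real.pi_pos
  have hπiu : (Real.pi:ℂ) * Complex.I * u ≠ 0 := by
    apply mul_ne_zero (mul_ne_zero _ Complex.I_ne_zero) hu0
    exact Complex.ofReal_ne_zero.mpr Real.pi_ne_zero
  set Q : ℂ := (-Complex.I * u) ^ ((1:ℂ)/2) with hQdef
  have hQ : Q ≠ 0 := cpow_half_ne_zero hmiu
  have hQQ : Q * Q = -Complex.I * u := cpow_half_mul_self hmiu
  have huQ : u = Complex.I * (Q * Q) := by
    linear_combination u * Complex.I_mul_I + (-Complex.I) * hQQ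
  have hdiv : u / Q = Complex.I * Q := by
    rw [huQ]; field_simp
  set sg : ℂ := (Real.sign u.re : ℂ) with hsgdef
  set P : ℂ := ((Real.pi:ℂ) * Complex.I * u) ^ ((1:ℂ)/2) with hPdef
  have hPP : P * P = (Real.pi:ℂ) * Complex.I * u := cpow_half_mul_self hπiu
  have hsπ : ((Real.sqrt Real.pi : ℝ) : ℂ) ≠ 0 :=
    Complex.ofReal_ne_zero.mpr (Real.sqrt_ne_zero'.mpr hπ)
  have hP : P = ((Real.sqrt Real.pi : ℝ) : ℂ) * (sg * Complex.I * Q) := by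
    rw [hPdef, show (Real.pi:ℂ) * Complex.I * u = ((Real.pi : ℝ) : ℂ) * (Complex.I * u) by ring,
      ofReal_mul_cpow_half hπ hiu, I_mul_cpow_half hu]
  set E : ℝ → ℂ := fun s => Complex.exp ((Real.pi:ℂ) * Complex.I * (x:ℂ)^2 * u * (s:ℂ)^2)
    with hEdef
  set K : ℂ := ∫ s in Set.Ioc (0:ℝ) 1, E s with hKdef
  set e : ℂ := Complex.exp ((Real.pi:ℂ) * Complex.I * (x:ℂ)^2 * τ) with hedef
  -- left-hand side computation
  have hL : (x:ℂ)^k * cerf (-Complex.I * P * (x:ℂ)) * e = (2 * sg * Q) * ((x:ℂ)^(k+1) * e * K) := by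
    rw [cerf]
    have hfg : ∀ t : ℝ, Complex.exp (-(((t:ℂ)) * (-Complex.I * P * (x:ℂ)))^2) = E t := by
      intro t
      rw [hEdef]
      congr 1
      linear_combination (-(t:ℂ)^2 * P^2 * (x:ℂ)^2) * Complex.I_mul_I
        + (t:ℂ)^2 * (x:ℂ)^2 * hPP
    simp only [hfg]
    rw [intervalIntegral.integral_of_le zero_le_one, ← hKdef, hP]
    have h2 : (2:ℂ) / ((Real.sqrt Real.pi : ℝ) : ℂ) *
        (-Complex.I * (((Real.sqrt Real.pi : ℝ) : ℂ) * (sg * Complex.I * Q)) * (x:ℂ)) =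
        2 * sg * Q * (x:ℂ) := by
      rw [div_mul_eq_mul_div, div_eq_iff hsπ]
      linear_combination (-2 * ((Real.sqrt Real.pi : ℝ) : ℂ) * sg * Q * (x:ℂ)) *
        Complex.I_mul_I
    linear_combination ((x:ℂ)^k * K * e) * h2
  -- right-hand side computation
  have hR : (∫ t in (0:ℝ)..1,
      (x:ℂ)^(k+1) * Complex.exp ((Real.pi:ℂ) * Complex.I * (x:ℂ)^2 * (τ + (t:ℂ)*u)) /
        (-Complex.I * ((t:ℂ)*u)) ^ ((1:ℂ)/2) * u)
      = (2 * (x:ℂ)^(k+1) * e * (Complex.I * Q)) * K := by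
    rw [intervalIntegral.integral_of_le zero_le_one, ← sq_image_Ioc]
    rw [integral_image_eq_integral_abs_deriv_smul (f' := fun s => 2*s) measurableSet_Ioc
      (fun s _ => by simpa using (hasDerivAt_pow 2 s).hasDerivWithinAt)
      (fun a ha b hb hab => by
        have ha1 := ha.1; have hb1 := hb.1
        exact le_antisymm (by nlinarith) (by nlinarith))]
    rw [setIntegral_congr_fun measurableSet_Ioc (g := fun s => (2 * (x:ℂ)^(k+1) * e * (u / Q)) * E s) ?_]
    · rw [MeasureTheory.integral_const_mul, ← hKdef, hdiv]
    · intro s hs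
      have hs0 : 0 < s := hs.1
      have hsC : ((s:ℝ):ℂ) ≠ 0 := Complex.ofReal_ne_zero.mpr hs0.ne'
      simp only
      rw [show -Complex.I * (((s^2 : ℝ):ℂ) * u) = ((s^2 : ℝ):ℂ) * (-Complex.I * u) by
          push_cast; ring,
        ofReal_mul_cpow_half (by positivity) hmiu, Real.sqrt_sq hs0.le, ← hQdef,
        show (Real.pi:ℂ) * Complex.I * (x:ℂ)^2 * (τ + ((s^2:ℝ):ℂ)*u) =
          (Real.pi:ℂ) * Complex.I * (x:ℂ)^2 * τ +
            (Real.pi:ℂ) * Complex.I * (x:ℂ)^2 * u * (s:ℂ)^2 by push_cast; ring,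
        Complex.exp_add, Complex.real_smul, ← hedef]
      rw [hEdef]
      push_cast
      rw [abs_of_pos (by positivity : (0:ℝ) < 2*s)]
      field_simp
      push_cast
      ring
  rw [hR]
  linear_combination hL + (2*sg*Q*(x:ℂ)^(k+1)*e*K) * Complex.I_mul_I

/-- Summability of polynomially-weighted Gaussian sums over the shifted lattice. -/
lemma summable_aux (M : ℕ) (hM : 0 < M) (μ : ℝ) (k : ℕ) {m : ℝ} (hm : 0 < m) :
    Summable (fun n : ℤ =>
      |Real.sqrt M * n + μ| ^ (k+1) * Real.exp (-(Real.pi * m * (Real.sqrt M * n + μ)^2))) := by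
  set r : ℝ := Real.sqrt M with hrdef
  have hr : 0 < r := Real.sqrt_pos.mpr (by exact_mod_cast hM)
  have hr2 : r^2 = (M:ℝ) := Real.sq_sqrt (Nat.cast_nonneg M)
  set T : ℝ := m * M with hTdef
  have hT : 0 < T := mul_pos hm (by exact_mod_cast hM)
  set S : ℝ := m * r * |μ| with hSdef
  set A : ℝ := r + |μ| with hAdef
  have hA : 0 < A := by positivity
  have hpow : ∀ a : ℝ, 0 ≤ a → (a+1)^(k+1) ≤ 2^(k+1) * (a^(k+1) + 1) := by
    intro a ha
    rcases le_total a 1 with h | h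
    · have h1 : (a+1)^(k+1) ≤ 2^(k+1) :=
        pow_le_pow_left₀ (by linarith) (by linarith) _
      nlinarith [pow_nonneg ha (k+1), pow_pos (show (0:ℝ) < 2 by norm_num) (k+1)]
    · have h1 : (a+1)^(k+1) ≤ (2*a)^(k+1) :=
        pow_le_pow_left₀ (by linarith) (by linarith) _
      rw [mul_pow] at h1
      nlinarith [pow_pos (show (0:ℝ) < 2 by norm_num) (k+1)]
  have hS1 := summable_pow_mul_jacobiTheta₂_term_bound S hT (k+1)
  have hS0 := summable_pow_mul_jacobiTheta₂_term_bound S hT 0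
  have hbnd := (hS1.mul_left ((2:ℝ)^(k+1) * A^(k+1))).add
    (hS0.mul_left ((2:ℝ)^(k+1) * A^(k+1)))
  apply Summable.of_nonneg_of_le (fun n => by positivity) _ hbnd
  intro n
  have hfin : |r * (n:ℝ) + μ| ^ (k+1) * Real.exp (-(Real.pi * m * (r * (n:ℝ) + μ)^2)) ≤
      (2:ℝ)^(k+1) * A^(k+1) * ((|(n:ℝ)| ^ (k+1)) *
        Real.exp (-Real.pi * (T * (n:ℝ) ^ 2 - 2 * S * |(n:ℝ)|))) +
      (2:ℝ)^(k+1) * A^(k+1) * ((|(n:ℝ)| ^ 0) *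
        Real.exp (-Real.pi * (T * (n:ℝ) ^ 2 - 2 * S * |(n:ℝ)|))) := by
    have hx : |r * (n:ℝ) + μ| ≤ A * (|(n:ℝ)| + 1) := by
      calc |r * (n:ℝ) + μ| ≤ |r * (n:ℝ)| + |μ| := abs_add_le _ _
        _ = r * |(n:ℝ)| + |μ| := by rw [abs_mul, abs_of_pos hr]
        _ ≤ A * (|(n:ℝ)| + 1) := by
            have h1 := abs_nonneg (n:ℝ); have h2 := abs_nonneg μ
            rw [hAdef]; nlinarith
    have h1 : |r * (n:ℝ) + μ| ^ (k+1) ≤ A^(k+1) * (|(n:ℝ)| + 1)^(k+1) := by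
      rw [← mul_pow]
      exact pow_le_pow_left₀ (abs_nonneg _) hx _
    have habs : |μ| * |(n:ℝ)| = |μ * (n:ℝ)| := (abs_mul μ (n:ℝ)).symm
    have hsq : (M:ℝ) * (n:ℝ)^2 - 2*r*|μ| * |(n:ℝ)| ≤ (r * (n:ℝ) + μ)^2 := by
      nlinarith [mul_nonneg hr.le
          (by linarith [neg_abs_le (μ*(n:ℝ))] : (0:ℝ) ≤ μ*(n:ℝ) + |μ*(n:ℝ)|),
        hr2, sq_nonneg μ, habs]
    have h3 : Real.exp (-(Real.pi * m * (r * (n:ℝ) + μ)^2)) ≤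
        Real.exp (-Real.pi * (T * (n:ℝ) ^ 2 - 2 * S * |(n:ℝ)|)) := by
      apply Real.exp_le_exp.mpr
      have hmul : Real.pi * m * ((M:ℝ) * (n:ℝ)^2 - 2*r*|μ| * |(n:ℝ)|) ≤
          Real.pi * m * (r * (n:ℝ) + μ)^2 :=
        mul_le_mul_of_nonneg_left hsq (by positivity)
      rw [hTdef, hSdef,
        show -Real.pi * (m * M * (n:ℝ)^2 - 2*(m*r*|μ|)*|(n:ℝ)|) =
          -(Real.pi * m * ((M:ℝ) * (n:ℝ)^2 - 2*r*|μ| * |(n:ℝ)|)) by push_cast; ring]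
      linarith
    calc |r * (n:ℝ) + μ| ^ (k+1) * Real.exp (-(Real.pi * m * (r * (n:ℝ) + μ)^2))
        ≤ (A^(k+1) * (|(n:ℝ)| + 1)^(k+1)) *
            Real.exp (-Real.pi * (T * (n:ℝ) ^ 2 - 2 * S * |(n:ℝ)|)) := by
          apply mul_le_mul h1 h3 (Real.exp_pos _).le (by positivity)
      _ ≤ (A^(k+1) * (2^(k+1) * (|(n:ℝ)|^(k+1) + 1))) *
            Real.exp (-Real.pi * (T * (n:ℝ) ^ 2 - 2 * S * |(n:ℝ)|)) := by
          apply mul_le_mul_of_nonneg_right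
            (mul_le_mul_of_nonneg_left (hpow _ (abs_nonneg _)) (by positivity))
            (Real.exp_pos _).le
      _ = (2:ℝ)^(k+1) * A^(k+1) * ((|(n:ℝ)| ^ (k+1)) *
            Real.exp (-Real.pi * (T * (n:ℝ) ^ 2 - 2 * S * |(n:ℝ)|))) +
          (2:ℝ)^(k+1) * A^(k+1) * ((|(n:ℝ)| ^ 0) *
            Real.exp (-Real.pi * (T * (n:ℝ) ^ 2 - 2 * S * |(n:ℝ)|))) := by
          ring
  exact hfin.trans (le_of_eq (by push_cast; ring))

theorem thetaHat_integral_expression (M : ℕ) (hM : 0 < M) (μ : ℝ) (k : ℕ)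
    (τ w : ℂ) (hτ : 0 < τ.im) (hw : 0 < w.im) (hre : τ.re ≠ w.re) :
    ThetaHat M k μ τ w =
      -Complex.I * (Real.sign ((w - τ).re) : ℂ) *
        ∫ t in (0 : ℝ)..1,
          theta M (k + 1) μ (τ + (t : ℂ) * (w - τ)) /
              (-Complex.I * ((τ + (t : ℂ) * (w - τ)) - τ)) ^ ((1 : ℂ) / 2) * (w - τ) := by
  have hu : (w - τ).re ≠ 0 := by
    rw [Complex.sub_re]; exact sub_ne_zero.mpr (Ne.symm hre)
  have hu0 : w - τ ≠ 0 := fun h => hu (by rw [h, Complex.zero_re])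
  set m : ℝ := min τ.im w.im with hmdef
  have hm : 0 < m := lt_min hτ hw
  have him : ∀ t ∈ Set.Ioc (0:ℝ) 1, m ≤ (τ + (t:ℂ)*(w-τ)).im := by
    intro t ht
    have h1 : (τ + (t:ℂ)*(w-τ)).im = τ.im + t*(w.im - τ.im) := by
      simp [Complex.add_im, Complex.mul_im, Complex.sub_im]
    rw [h1]
    rcases le_total τ.im w.im with h | h
    · nlinarith [ht.1, ht.2, min_le_left τ.im w.im,
        mul_nonneg ht.1.le (sub_nonneg.mpr h)]
    · nlinarith [ht.1, ht.2, min_le_right τ.im w.im,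
        mul_nonneg (sub_nonneg.mpr ht.2) (sub_nonneg.mpr h)]
  set U : ℝ := ‖w - τ‖ with hUdef
  have hUpos : 0 < U := norm_pos_iff.mpr hu0
  -- the summands of the integrated series
  set G : ℤ → ℝ → ℂ := fun n t =>
    ((Real.sqrt M * n + μ : ℝ) : ℂ) ^ (k+1) *
      Complex.exp ((Real.pi:ℂ) * Complex.I * ((Real.sqrt M * n + μ : ℝ) : ℂ) ^ 2 *
        (τ + (t:ℂ)*(w-τ))) /
      (-Complex.I * ((t:ℂ)*(w-τ))) ^ ((1:ℂ)/2) * (w - τ) with hGdef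
  set B : ℤ → ℝ := fun n => |Real.sqrt M * n + μ| ^ (k+1) *
    Real.exp (-(Real.pi * m * (Real.sqrt M * n + μ)^2)) * (U ^ ((1:ℝ)/2)) with hBdef
  have hBsum : Summable (fun n : ℤ => B n * 2) :=
    ((summable_aux M hM μ k hm).mul_right _).mul_right _
  -- pointwise norm bound
  have hnormle : ∀ (n : ℤ), ∀ t ∈ Set.Ioc (0:ℝ) 1, ‖G n t‖ ≤ B n * t ^ (-(1:ℝ)/2) := by
    intro n t ht
    have ht0 : 0 < t := ht.1
    have hbase : -Complex.I * ((t:ℂ)*(w-τ)) ≠ 0 := by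
      apply mul_ne_zero (neg_ne_zero.mpr Complex.I_ne_zero)
      exact mul_ne_zero (Complex.ofReal_ne_zero.mpr ht0.ne') hu0
    set x : ℝ := Real.sqrt M * n + μ with hxdef
    have hGnorm : ‖G n t‖ = |x|^(k+1) * Real.exp (-(Real.pi * x^2 * (τ + (t:ℂ)*(w-τ)).im)) /
        ((t * U) ^ ((1:ℝ)/2)) * U := by
      rw [hGdef]
      simp only
      rw [norm_mul, norm_div, norm_mul, norm_pow, Complex.norm_real, Real.norm_eq_abs,
        norm_exp_aux, norm_cpow_half hbase]
      congr 3
      rw [norm_mul, norm_mul, Complex.norm_real, Real.norm_eq_abs, abs_of_pos ht0]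
      simp [hUdef]
    rw [hGnorm]
    have htU : (t * U) ^ ((1:ℝ)/2) = t ^ ((1:ℝ)/2) * U ^ ((1:ℝ)/2) :=
      Real.mul_rpow ht0.le (norm_nonneg _)
    have htpos : 0 < t ^ ((1:ℝ)/2) := Real.rpow_pos_of_pos ht0 _
    have hUhp : 0 < U ^ ((1:ℝ)/2) := Real.rpow_pos_of_pos hUpos _
    have hexp : Real.exp (-(Real.pi * x^2 * (τ + (t:ℂ)*(w-τ)).im)) ≤
        Real.exp (-(Real.pi * m * x^2)) := by
      apply Real.exp_le_exp.mpr
      have h1 := him t ht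
      nlinarith [sq_nonneg x, Real.pi_pos, mul_le_mul_of_nonneg_left h1
        (by positivity : (0:ℝ) ≤ Real.pi * x^2)]
    rw [htU, div_mul_eq_mul_div, div_le_iff₀ (by positivity)]
    have hkey : B n * t ^ (-(1:ℝ)/2) * (t ^ ((1:ℝ)/2) * U ^ ((1:ℝ)/2)) =
        |x|^(k+1) * Real.exp (-(Real.pi * m * x^2)) * U := by
      rw [hBdef]
      simp only
      rw [show (-(1:ℝ)/2) = -((1:ℝ)/2) by norm_num, Real.rpow_neg ht0.le]
      have hUU : U ^ ((1:ℝ)/2) * U ^ ((1:ℝ)/2) = U := by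
        rw [← Real.rpow_add hUpos]; norm_num
      have htt : (t ^ ((1:ℝ)/2))⁻¹ * t ^ ((1:ℝ)/2) = 1 := inv_mul_cancel₀ htpos.ne'
      calc |x|^(k+1) * Real.exp (-(Real.pi * m * x^2)) * U ^ ((1:ℝ)/2) * (t ^ ((1:ℝ)/2))⁻¹ *
            (t ^ ((1:ℝ)/2) * U ^ ((1:ℝ)/2))
          = |x|^(k+1) * Real.exp (-(Real.pi * m * x^2)) *
              (U ^ ((1:ℝ)/2) * U ^ ((1:ℝ)/2)) * ((t ^ ((1:ℝ)/2))⁻¹ * t ^ ((1:ℝ)/2)) := by ring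
        _ = |x|^(k+1) * Real.exp (-(Real.pi * m * x^2)) * U := by rw [hUU, htt]; ring
    rw [hkey]
    have hUn : (0:ℝ) ≤ U := (norm_nonneg _)
    apply mul_le_mul_of_nonneg_right _ hUn
    exact mul_le_mul_of_nonneg_left hexp (by positivity)
  -- integrability of the bound
  have hbint : IntegrableOn (fun t : ℝ => t ^ (-(1:ℝ)/2)) (Set.Ioc (0:ℝ) 1) := by
    have h := (intervalIntegral.intervalIntegrable_rpow' (a := 0) (b := 1)
      (r := -(1:ℝ)/2) (by norm_num))
    exact h.1
  have hbval : ∫ t in Set.Ioc (0:ℝ) 1, t ^ (-(1:ℝ)/2) = 2 := by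
    rw [← intervalIntegral.integral_of_le zero_le_one,
      integral_rpow (Or.inl (by norm_num))]
    rw [show (-(1:ℝ)/2 + 1) = (1:ℝ)/2 by norm_num, Real.one_rpow,
      Real.zero_rpow (by norm_num)]
    norm_num
  -- measurability
  have hmeas : ∀ n : ℤ, AEStronglyMeasurable (G n) (volume.restrict (Set.Ioc (0:ℝ) 1)) := by
    intro n
    have hMmeas : Measurable (fun t : ℝ =>
        ((Real.sqrt M * n + μ : ℝ) : ℂ) ^ (k+1) *
          Complex.exp ((Real.pi:ℂ) * Complex.I * ((Real.sqrt M * n + μ : ℝ) : ℂ) ^ 2 *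
            (τ + (t:ℂ)*(w-τ))) /
          Complex.exp (Complex.log (-Complex.I * ((t:ℂ)*(w-τ))) * ((1:ℂ)/2)) * (w - τ)) := by
      apply Measurable.mul _ measurable_const
      apply Measurable.div
      · exact (((Complex.measurable_ofReal.mul measurable_const).const_add τ).const_mul
          _).cexp.const_mul _
      · exact (((Complex.measurable_ofReal.mul measurable_const).const_mul
          (-Complex.I)).clog.mul_const _).cexp
    apply hMmeas.aestronglyMeasurable.congr
    rw [Filter.eventuallyEq_iff_exists_mem]
    refine ⟨Set.Ioc (0:ℝ) 1, ?_, ?_⟩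
    · rw [mem_ae_iff]
      simp [Measure.restrict_apply, MeasurableSet.compl, measurableSet_Ioc]
    · intro t ht
      have hbase : -Complex.I * ((t:ℂ)*(w-τ)) ≠ 0 := by
        apply mul_ne_zero (neg_ne_zero.mpr Complex.I_ne_zero)
        exact mul_ne_zero (Complex.ofReal_ne_zero.mpr ht.1.ne') hu0
      rw [hGdef]
      simp only
      rw [Complex.cpow_def_of_ne_zero hbase]
  -- integrability of each term
  have hInt : ∀ n : ℤ, Integrable (G n) (volume.restrict (Set.Ioc (0:ℝ) 1)) := by
    intro n
    apply Integrable.mono' (hbint.const_mul (B n)) (hmeas n)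
    rw [ae_restrict_iff' measurableSet_Ioc]
    exact ae_of_all _ fun t ht => by
      simpa [mul_comm] using hnormle n t ht
  -- summability of integrals of norms
  have hSum : Summable (fun n : ℤ => ∫ t in Set.Ioc (0:ℝ) 1, ‖G n t‖) := by
    apply Summable.of_nonneg_of_le
      (fun n => integral_nonneg fun t => norm_nonneg _) _ hBsum
    intro n
    have hle : ∫ t in Set.Ioc (0:ℝ) 1, ‖G n t‖ ≤
        ∫ t in Set.Ioc (0:ℝ) 1, B n * t ^ (-(1:ℝ)/2) := by
      apply integral_mono_ae (hInt n).norm (hbint.const_mul (B n))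
      rw [Filter.EventuallyLE, ae_restrict_iff' measurableSet_Ioc]
      exact ae_of_all _ fun t ht => hnormle n t ht
    calc ∫ t in Set.Ioc (0:ℝ) 1, ‖G n t‖ ≤ ∫ t in Set.Ioc (0:ℝ) 1, B n * t ^ (-(1:ℝ)/2) := hle
      _ = B n * 2 := by rw [MeasureTheory.integral_const_mul, hbval]
  -- main computation
  rw [ThetaHat]
  simp only [add_sub_cancel_left]
  have hsplit : ∀ t : ℝ, theta M (k+1) μ (τ + (t:ℂ)*(w-τ)) /
      (-Complex.I * ((t:ℂ)*(w-τ))) ^ ((1:ℂ)/2) * (w-τ) = ∑' n : ℤ, G n t := by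
    intro t
    rw [theta, div_eq_mul_inv, ← tsum_mul_right, ← tsum_mul_right]
    apply tsum_congr
    intro n
    rw [hGdef]
    simp only [div_eq_mul_inv]
  simp only [hsplit]
  rw [intervalIntegral.integral_of_le zero_le_one,
    ← MeasureTheory.integral_tsum_of_summable_integral_norm hInt hSum, ← tsum_mul_left]
  apply tsum_congr
  intro n
  rw [← intervalIntegral.integral_of_le zero_le_one]
  exact per_n_identity k τ (w - τ) hu (Real.sqrt M * n + μ)
end

section
/- For k ≥ 0 and μ ∈ L'/L, the false theta function θ̃_{k,μ}(τ) = Σ_{n ∈ L+μ} sgn(n) n^k e^{πi n² τ} admits the integral expression θ̃_{k,μ}(τ) = −i ∫_τ^{i∞} θ_{k+1,μ}(z)/√(−i(z−τ)) dz, where the path is vertical from τ to i∞ (shifted by any ε > 0 to avoid the branch cut) and θ_{k+1,μ}(z) decays exponentially as z → i∞. -/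
open Complex MeasureTheory

lemma aux_sqrt_integral {r : ℝ} (hr : 0 < r) :
    ∫ t in Set.Ioi (0:ℝ), Real.exp (-(r*t)) * (Real.sqrt t)⁻¹
      = (Real.sqrt r)⁻¹ * Real.sqrt Real.pi := by
  have h := Real.integral_rpow_mul_exp_neg_mul_Ioi (a := 1/2) (r := r) one_half_pos hr
  rw [Real.Gamma_one_half_eq] at h
  rw [show (∫ t in Set.Ioi (0:ℝ), Real.exp (-(r*t)) * (Real.sqrt t)⁻¹)
      = ∫ t in Set.Ioi (0:ℝ), t ^ ((1:ℝ)/2 - 1) * Real.exp (-(r*t)) from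
    setIntegral_congr_fun measurableSet_Ioi (fun t ht => by
      rw [show ((1:ℝ)/2 - 1) = -(1/2) by norm_num, Real.rpow_neg (le_of_lt ht),
        ← Real.sqrt_eq_rpow, mul_comm]), h, one_div, ← Real.sqrt_eq_rpow, Real.sqrt_inv]

lemma aux_sqrt_integrable {r : ℝ} (hr : 0 < r) :
    IntegrableOn (fun t : ℝ => Real.exp (-(r*t)) * (Real.sqrt t)⁻¹) (Set.Ioi 0) := by
  have h := integrableOn_rpow_mul_exp_neg_mul_rpow (s := -(1/2)) (p := 1) (b := r)
    (by norm_num) (by norm_num) hr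
  refine h.congr_fun (fun t ht => ?_) measurableSet_Ioi
  dsimp only
  rw [Real.rpow_one, Real.rpow_neg (le_of_lt ht), ← Real.sqrt_eq_rpow, mul_comm, neg_mul]

lemma aux_real_id (a : ℝ) (k : ℕ) : a^(k+1) * |a|⁻¹ = Real.sign a * a^k := by
  rcases lt_trichotomy a 0 with h|h|h
  · rw [abs_of_neg h, Real.sign_of_neg h]; rw [pow_succ, inv_neg, mul_neg, mul_assoc, mul_inv_cancel₀ (ne_of_lt h), mul_one]
    ring
  · simp [h]
  · rw [abs_of_pos h, Real.sign_of_pos h]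
    field_simp [pow_succ]
    ring

lemma aux_sqrt_pi (a : ℝ) :
    (Real.sqrt (Real.pi * a^2))⁻¹ * Real.sqrt Real.pi = |a|⁻¹ := by
  rw [Real.sqrt_mul Real.pi_pos.le, Real.sqrt_sq_eq_abs, mul_inv, mul_comm (Real.sqrt Real.pi)⁻¹,
    mul_assoc, inv_mul_cancel₀ (ne_of_gt (Real.sqrt_pos.mpr Real.pi_pos)), mul_one]

lemma aux_exp_split (a : ℝ) (τ : ℂ) (t : ℝ) :
    Complex.exp (Real.pi * Complex.I * (a:ℂ)^2 * (τ + t*Complex.I)) =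
      Complex.exp (Real.pi * Complex.I * (a:ℂ)^2 * τ) *
        ((Real.exp (-(Real.pi * a^2 * t)) : ℝ) : ℂ) := by
  rw [Complex.ofReal_exp, ← Complex.exp_add]
  congr 1
  push_cast
  linear_combination (Real.pi * a^2 * t : ℂ) * Complex.I_sq

lemma aux_norm_C (a : ℝ) (τ : ℂ) (k : ℕ) :
    ‖(a:ℂ)^(k+1) * Complex.exp (Real.pi * Complex.I * (a:ℂ)^2 * τ)‖
      = |a|^(k+1) * Real.exp (-(Real.pi * a^2 * τ.im)) := by
  rw [norm_mul, norm_pow, Complex.norm_real, Real.norm_eq_abs,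
    Complex.norm_exp]
  congr 2
  simp [← Complex.ofReal_pow, Complex.mul_re, Complex.mul_im]

lemma aux_F_integrable (a : ℝ) (τ : ℂ) (k : ℕ) :
    IntegrableOn (fun t : ℝ => ((a:ℂ)^(k+1) * Complex.exp (Real.pi * Complex.I * (a:ℂ)^2 * τ)) *
      ((Real.exp (-(Real.pi * a^2 * t)) * (Real.sqrt t)⁻¹ : ℝ):ℂ)) (Set.Ioi 0) := by
  rcases eq_or_ne a 0 with h|h
  · simp only [h, Complex.ofReal_zero, zero_pow (Nat.succ_ne_zero k), zero_mul]
    exact integrable_zero _ _ _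
  · exact ((aux_sqrt_integrable (r := Real.pi * a^2) (by positivity)).ofReal.const_mul _)

lemma aux_F_integral (a : ℝ) (τ : ℂ) (k : ℕ) :
    (∫ t in Set.Ioi (0:ℝ), ((a:ℂ)^(k+1) * Complex.exp (Real.pi * Complex.I * (a:ℂ)^2 * τ)) *
      ((Real.exp (-(Real.pi * a^2 * t)) * (Real.sqrt t)⁻¹ : ℝ):ℂ))
    = (Real.sign a : ℂ) * (a:ℂ)^k * Complex.exp (Real.pi * Complex.I * (a:ℂ)^2 * τ) := by
  rcases eq_or_ne a 0 with h|h
  · simp [h, zero_pow (Nat.succ_ne_zero k)]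
  · have hr : 0 < Real.pi * a^2 := by positivity
    rw [MeasureTheory.integral_const_mul]
    rw [show (∫ t in Set.Ioi (0:ℝ), ((Real.exp (-(Real.pi * a^2 * t)) * (Real.sqrt t)⁻¹ : ℝ):ℂ))
        = ((∫ t in Set.Ioi (0:ℝ), Real.exp (-(Real.pi * a^2 * t)) * (Real.sqrt t)⁻¹ : ℝ):ℂ) from
      integral_ofReal, aux_sqrt_integral hr, aux_sqrt_pi a]
    have h2 : (a:ℂ)^(k+1) * ((|a|⁻¹ : ℝ):ℂ) = (Real.sign a : ℂ) * (a:ℂ)^k := by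
      exact_mod_cast congrArg (Complex.ofReal) (aux_real_id a k)
    linear_combination Complex.exp (Real.pi * Complex.I * (a:ℂ)^2 * τ) * h2

lemma aux_F_norm_integral (a : ℝ) (τ : ℂ) (k : ℕ) :
    (∫ t in Set.Ioi (0:ℝ), ‖((a:ℂ)^(k+1) * Complex.exp (Real.pi * Complex.I * (a:ℂ)^2 * τ)) *
        ((Real.exp (-(Real.pi * a^2 * t)) * (Real.sqrt t)⁻¹ : ℝ):ℂ)‖)
      ≤ |a|^k * Real.exp (-(Real.pi * a^2 * τ.im)) := by
  rcases eq_or_ne a 0 with h|h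
  · simp only [h, Complex.ofReal_zero, zero_pow (Nat.succ_ne_zero k), zero_mul, norm_zero,
      integral_zero]
    positivity
  · have hr : 0 < Real.pi * a^2 := by positivity
    have heq : ∀ t : ℝ, ‖((a:ℂ)^(k+1) * Complex.exp (Real.pi * Complex.I * (a:ℂ)^2 * τ)) *
        ((Real.exp (-(Real.pi * a^2 * t)) * (Real.sqrt t)⁻¹ : ℝ):ℂ)‖
        = (|a|^(k+1) * Real.exp (-(Real.pi * a^2 * τ.im))) *
          (Real.exp (-(Real.pi * a^2 * t)) * (Real.sqrt t)⁻¹) := fun t => by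
      rw [norm_mul, aux_norm_C, Complex.norm_real, Real.norm_eq_abs,
        _root_.abs_of_nonneg (show (0:ℝ) ≤ Real.exp (-(Real.pi*a^2*t)) * (Real.sqrt t)⁻¹ by positivity)]
    simp only [heq]
    rw [MeasureTheory.integral_const_mul, aux_sqrt_integral hr, aux_sqrt_pi a]
    apply le_of_eq
    rw [pow_succ]
    field_simp

lemma aux_summable (M : ℕ) (hM : 0 < M) (μ : ℝ) (k : ℕ) {s : ℝ} (hs : 0 < s) :
    Summable (fun n : ℤ => |Real.sqrt M * n + μ|^k *
      Real.exp (-(Real.pi * (Real.sqrt M * n + μ)^2 * s))) := by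
  have hM0 : (0:ℝ) < M := by exact_mod_cast hM
  have hM' : (0:ℝ) < Real.sqrt M := Real.sqrt_pos.mpr hM0
  have h := (HurwitzKernelBounds.summable_f_int k (μ / Real.sqrt M)
    (mul_pos hM0 hs)).mul_left ((Real.sqrt M)^k)
  refine h.congr (fun n => ?_)
  unfold HurwitzKernelBounds.f_int
  have key : Real.sqrt M * (n:ℝ) + μ = Real.sqrt M * ((n:ℝ) + μ / Real.sqrt M) := by
    rw [mul_add, mul_div_cancel₀ _ (ne_of_gt hM')]
  rw [key, abs_mul, abs_of_pos hM', mul_pow,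
    show (Real.sqrt M * ((n:ℝ) + μ/Real.sqrt M))^2 = ((n:ℝ) + μ/Real.sqrt M)^2 * M by
      rw [mul_pow, Real.sq_sqrt (Nat.cast_nonneg M)]; ring]
  rw [show -(Real.pi * (((n:ℝ) + μ/Real.sqrt M)^2 * M) * s)
      = -Real.pi * ((n:ℝ) + μ/Real.sqrt M)^2 * ((M:ℝ)*s) by ring]
  ring

/-- The false theta function `θ̃_{k,μ}(τ) = ∑_{n ∈ √M ℤ + μ} sgn(n) n^k e^{π i n² τ}`. -/
noncomputable def thetaTilde (M : ℕ) (k : ℕ) (μ : ℝ) (τ : ℂ) : ℂ :=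
  ∑' n : ℤ, (Real.sign (Real.sqrt M * n + μ) : ℂ) * ((Real.sqrt M * n + μ : ℝ) : ℂ) ^ k *
    Complex.exp (Real.pi * Complex.I * ((Real.sqrt M * n + μ : ℝ) : ℂ) ^ 2 * τ)

theorem falseTheta_integral_expression (M : ℕ) (hM : 0 < M) (μ : ℝ) (k : ℕ)
    (τ : ℂ) (hτ : 0 < τ.im) :
    thetaTilde M k μ τ =
      -Complex.I * ∫ t in Set.Ioi (0 : ℝ),
        theta M (k + 1) μ (τ + (t : ℂ) * Complex.I) /
            (-Complex.I * ((τ + (t : ℂ) * Complex.I) - τ)) ^ ((1 : ℂ) / 2) * Complex.I := by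
  set a : ℤ → ℝ := fun n => Real.sqrt M * n + μ with ha
  set F : ℤ → ℝ → ℂ := fun n t =>
    ((a n:ℂ)^(k+1) * Complex.exp (Real.pi * Complex.I * (a n:ℂ)^2 * τ)) *
      ((Real.exp (-(Real.pi * (a n)^2 * t)) * (Real.sqrt t)⁻¹ : ℝ):ℂ) with hF
  have step1 : ∀ t ∈ Set.Ioi (0:ℝ),
      theta M (k+1) μ (τ + (t:ℂ)*Complex.I) /
          (-Complex.I * ((τ + (t:ℂ)*Complex.I) - τ))^((1:ℂ)/2) * Complex.I
        = (∑' n : ℤ, F n t) * Complex.I := by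
    intro t ht
    congr 1
    have h1 : (-Complex.I * ((τ + (t:ℂ)*Complex.I) - τ)) = (t:ℂ) := by
      linear_combination (-(t:ℂ)) * Complex.I_sq
    rw [h1, show ((1:ℂ)/2) = (((1/2:ℝ)):ℂ) by norm_num,
      ← Complex.ofReal_cpow (le_of_lt ht) (1/2), ← Real.sqrt_eq_rpow,
      div_eq_mul_inv, theta, ← tsum_mul_right]
    refine tsum_congr fun n => ?_
    rw [aux_exp_split (a n) τ t, hF]
    simp only [Complex.ofReal_mul, Complex.ofReal_inv]
    ring
  have step1' : (∫ t in Set.Ioi (0:ℝ),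
      theta M (k+1) μ (τ + (t:ℂ)*Complex.I) /
          (-Complex.I * ((τ + (t:ℂ)*Complex.I) - τ))^((1:ℂ)/2) * Complex.I)
      = (∫ t in Set.Ioi (0:ℝ), (∑' n : ℤ, F n t)) * Complex.I := by
    rw [← integral_mul_const]
    exact setIntegral_congr_fun measurableSet_Ioi step1
  rw [step1']
  set X := ∫ t in Set.Ioi (0:ℝ), (∑' n : ℤ, F n t) with hX
  rw [show -Complex.I * (X * Complex.I) = X from by linear_combination (-X) * Complex.I_sq]
  have hint : ∀ n : ℤ, Integrable (F n) (volume.restrict (Set.Ioi 0)) :=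
    fun n => aux_F_integrable (a n) τ k
  have hsum : Summable (fun n : ℤ => ∫ t in Set.Ioi (0:ℝ), ‖F n t‖) := by
    refine Summable.of_nonneg_of_le (fun n => integral_nonneg (fun t => norm_nonneg _))
      (fun n => aux_F_norm_integral (a n) τ k) ?_
    exact aux_summable M hM μ k hτ
  rw [hX, ← MeasureTheory.integral_tsum_of_summable_integral_norm hint hsum, thetaTilde]
  exact tsum_congr fun n => (aux_F_integral (a n) τ k).symm
end

section
/- Let n ≥ 3 and define c_ε(k) = ((−1)^k / (P^k (n−3)!)) Σ_{l=k}^{n−3} (−2)^{−l} (n−2+Σ_{j=1}^n ε_j/p_j)^{l−k} · s(n−2, l+1) · C(l,k), where s(·,·) is the (unsigned-convention as in the paper) Stirling number of the first kind and C(l,k) the binomial coefficient. Then Σ_{ε ∈ {±1}^n} ε_1⋯ε_n c_ε(k) = 0 for every 0 ≤ k ≤ n−3. -/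
open Polynomial

lemma key (n : ℕ) (q : Polynomial ℚ) (hq : q.degree < n) (a : Fin n → ℚ) (c : ℚ) :
    ∑ s : Fin n → Bool,
      (∏ j, (if s j then (1 : ℚ) else -1)) *
        q.eval (c + ∑ j, (if s j then (1 : ℚ) else -1) * a j) = 0 := by
  induction n generalizing q c with
  | zero =>
      have hq0 : q = 0 := by
        rw [← Polynomial.degree_eq_bot]
        exact Nat.WithBot.lt_zero_iff.mp (by simpa using hq)
      simp [hq0]
  | succ n ih =>
      set a0 := a 0 with ha0
      set r : Polynomial ℚ := q.comp (X + C a0) - q.comp (X + C (-a0)) with hr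
      have hdeg : r.degree < n := by
        rcases eq_or_ne q 0 with h0 | h0
        · have : r = 0 := by simp [hr, h0]
          rw [this, degree_zero]
          exact WithBot.bot_lt_coe n
        · have hlc : ∀ b : ℚ, (q.comp (X + C b)).leadingCoeff = q.leadingCoeff := by
            intro b
            rw [leadingCoeff_comp (by simp [natDegree_X_add_C])]
            simp [(monic_X_add_C b).leadingCoeff]
          have hne : ∀ b : ℚ, q.comp (X + C b) ≠ 0 := by
            intro b hb
            exact h0 (leadingCoeff_eq_zero.mp (by rw [← hlc b, hb, leadingCoeff_zero]))
          have hnd : ∀ b : ℚ, (q.comp (X + C b)).degree = q.degree := by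
            intro b
            rw [degree_eq_natDegree (hne b), degree_eq_natDegree h0, natDegree_comp,
              natDegree_X_add_C, mul_one]
          have hlt : r.degree < q.degree := by
            have := degree_sub_lt (p := q.comp (X + C a0)) (q := q.comp (X + C (-a0)))
              (by rw [hnd a0, hnd (-a0)]) (hne a0) (by rw [hlc a0, hlc (-a0)])
            rwa [← hr, hnd a0] at this
          refine lt_of_lt_of_le hlt ?_
          rw [degree_eq_natDegree h0] at hq ⊢
          have : q.natDegree < n + 1 := by exact_mod_cast hq
          exact_mod_cast Nat.lt_succ_iff.mp this
      have hIH := ih r hdeg (fun i => a i.succ) c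
      rw [← hIH, ← (Fin.consEquiv (fun _ : Fin (n+1) => Bool)).sum_comp,
        Fintype.sum_prod_type, Fintype.sum_bool, ← Finset.sum_add_distrib]
      apply Finset.sum_congr rfl
      intro t _
      simp only [Fin.consEquiv_apply, Fin.prod_univ_succ, Fin.sum_univ_succ, Fin.cons_zero,
        Fin.cons_succ, if_true, Bool.false_eq_true, if_false, mul_neg_one, ← sub_eq_add_neg, hr, eval_sub, eval_comp, eval_add, eval_X, eval_C, ← ha0]
      ring



/-- Stirling numbers of the first kind: `s(0,0)=1`, `s(n,0)=s(0,k)=0`,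
`s(n+1,k) = s(n,k-1) + n·s(n,k)`. -/
def stir : ℕ → ℕ → ℕ
  | 0, 0 => 1
  | 0, _ + 1 => 0
  | _ + 1, 0 => 0
  | n + 1, k + 1 => stir n k + n * stir n (k + 1)

theorem sum_eps_c_eq_zero (n : ℕ) (hn : 3 ≤ n) (p : Fin n → ℕ) (hp : ∀ j, 2 ≤ p j)
    (hcop : ∀ i j, i ≠ j → Nat.Coprime (p i) (p j)) (k : ℕ) (hk : k ≤ n - 3) :
    ∑ s : Fin n → Bool,
      (∏ j, (if s j then (1 : ℚ) else -1)) *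
        ((-1 : ℚ) ^ k / ((∏ j, (p j : ℚ)) ^ k * (Nat.factorial (n - 3))) *
          ∑ l ∈ Finset.Icc k (n - 3),
            (-2 : ℚ) ^ (-(l : ℤ)) *
              ((n : ℚ) - 2 + ∑ j, (if s j then (1 : ℚ) else -1) / (p j : ℚ)) ^ (l - k) *
              (stir (n - 2) (l + 1) : ℚ) * (Nat.choose l k : ℚ)) = 0 := by
  simp only [Finset.mul_sum]
  rw [Finset.sum_comm]
  apply Finset.sum_eq_zero
  intro l hl
  have hdeg : ((Polynomial.X : Polynomial ℚ) ^ (l - k)).degree < n := by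
    rw [Polynomial.degree_X_pow]
    exact_mod_cast lt_of_le_of_lt (Nat.le_trans (Nat.sub_le l k)
      (Finset.mem_Icc.mp hl).2) (by omega)
  have hkey := key n (Polynomial.X ^ (l - k)) hdeg (fun j => ((p j : ℚ))⁻¹) ((n : ℚ) - 2)
  simp only [Polynomial.eval_pow, Polynomial.eval_X] at hkey
  have : ∀ s : Fin n → Bool,
      (∏ j, (if s j then (1 : ℚ) else -1)) *
        ((-1 : ℚ) ^ k / ((∏ j, (p j : ℚ)) ^ k * (Nat.factorial (n - 3))) *
          ((-2 : ℚ) ^ (-(l : ℤ)) *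
            ((n : ℚ) - 2 + ∑ j, (if s j then (1 : ℚ) else -1) / (p j : ℚ)) ^ (l - k) *
            (stir (n - 2) (l + 1) : ℚ) * (Nat.choose l k : ℚ)))
      = ((-1 : ℚ) ^ k / ((∏ j, (p j : ℚ)) ^ k * (Nat.factorial (n - 3))) *
          ((-2 : ℚ) ^ (-(l : ℤ)) * (stir (n - 2) (l + 1) : ℚ) * (Nat.choose l k : ℚ))) *
        ((∏ j, (if s j then (1 : ℚ) else -1)) *
          ((n : ℚ) - 2 + ∑ j, (if s j then (1 : ℚ) else -1) * ((p j : ℚ))⁻¹) ^ (l - k)) := by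
    intro s
    simp only [div_eq_mul_inv]
    ring
  rw [Finset.sum_congr rfl (fun s _ => this s), ← Finset.mul_sum, hkey, mul_zero]
end
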